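/- arXiv:1604.06695 — 8 statements merged into one kernel-verified Lean document; each statement's English description precedes it below -/
import Mathlib

section
/- Let p be a prime with p > 6 and p ≡ 2 (mod 3). Then there is no finite group G of order 6p that is generated by an element of order 2 together with an element of order 3. -/
open scoped Pointwise

theorem stmt_1 (p : ℕ) (hp : p.Prime) (hp6 : 6 < p) (hp3 : p % 3 = 2) :
    ¬ ∃ (G : Type) (_ : Group G) (_ : Fintype G),
      Fintype.card G = 6 * p ∧
      ∃ x y : G, orderOf x = 2 ∧ orderOf y = 3 ∧
        Subgroup.closure ({x, y} : Set G) = ⊤ := by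
  rintro ⟨G, _, _, hcard, x, y, hx, hy, hclo⟩
  haveI : Fact p.Prime := ⟨hp⟩
  haveI : Fact (Nat.Prime 3) := ⟨by norm_num⟩
  have hG : Nat.card G = 6 * p := by rw [Nat.card_eq_fintype_card, hcard]
  have hGpos : Nat.card G ≠ 0 := by rw [hG]; positivity
  have hpdvd6 : ¬ p ∣ 6 := fun h => absurd (Nat.le_of_dvd (by norm_num) h) (by omega)
  have h3p : ¬ (3 : ℕ) ∣ p := by omega
  -- factorizations
  have hfacp : (Nat.card G).factorization p = 1 := by
    rw [hG, Nat.factorization_mul (by norm_num) hp.pos.ne']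
    simp [Nat.factorization_eq_zero_of_not_dvd hpdvd6, hp.factorization_self]
  have hfac3 : (Nat.card G).factorization 3 = 1 := by
    rw [hG, show (6 : ℕ) = 2 * 3 by norm_num, Nat.factorization_mul (by norm_num) hp.pos.ne',
      Nat.factorization_mul (by norm_num) (by norm_num)]
    simp [Nat.factorization_eq_zero_of_not_dvd h3p,
      Nat.factorization_eq_zero_of_not_dvd (show ¬ (3:ℕ) ∣ 2 by norm_num),
      Nat.Prime.factorization_self (by norm_num : Nat.Prime 3)]
  -- the Sylow p-subgroup
  obtain ⟨P⟩ : Nonempty (Sylow p G) := Sylow.nonempty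
  have hPcard : Nat.card (P : Subgroup G) = p := by
    rw [P.card_eq_multiplicity, hfacp, pow_one]
  -- P is normal
  have hnp : Nat.card (Sylow p G) = 1 := by
    have h1 : Nat.card (Sylow p G) ∣ (P : Subgroup G).index := Sylow.card_dvd_index P
    have h2 : (P : Subgroup G).index = 6 := by
      have := Subgroup.card_mul_index (P : Subgroup G)
      rw [hPcard, hG] at this
      have hp0 : 0 < p := hp.pos
      nlinarith [this]
    rw [h2] at h1
    have h3 := card_sylow_modEq_one p G
    have h4 : Nat.card (Sylow p G) % p = 1 % p := h3
    have h5 : Nat.card (Sylow p G) ≤ 6 := Nat.le_of_dvd (by norm_num) h1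
    have h6 : 1 % p = 1 := Nat.mod_eq_of_lt (by omega)
    have h7 : Nat.card (Sylow p G) % p = Nat.card (Sylow p G) :=
      Nat.mod_eq_of_lt (by omega)
    omega
  have hPnormal : (P : Subgroup G).Normal := by
    rw [← Subgroup.normalizer_eq_top_iff, ← Subgroup.index_eq_one, ←
      hnp]
    exact (Sylow.card_eq_index_normalizer P).symm
  haveI := hPnormal
  -- P is cyclic
  haveI : IsCyclic (P : Subgroup G) := isCyclic_of_prime_card hPcard
  -- y centralizes P
  have hconj : ∀ a : (P : Subgroup G), y * (a : G) * y⁻¹ = a := by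
    intro a
    have hφ : (MulAut.conjNormal y : MulAut (P : Subgroup G)) = 1 := by
      have hd1 : orderOf (MulAut.conjNormal y : MulAut (P : Subgroup G)) ∣ 3 := by
        rw [← hy]; exact orderOf_map_dvd _ y
      have hd2 : orderOf (MulAut.conjNormal y : MulAut (P : Subgroup G)) ∣ p - 1 := by
        have := orderOf_dvd_natCard (MulAut.conjNormal y : MulAut (P : Subgroup G))
        rwa [IsCyclic.card_mulAut, hPcard, Nat.totient_prime hp] at this
      have h31 : ¬ (3 : ℕ) ∣ p - 1 := by omega
      rcases (Nat.prime_three).eq_one_or_self_of_dvd _ hd1 with h | h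
      · exact orderOf_eq_one_iff.mp h
      · exact absurd (h ▸ hd2) h31
    have := congrArg (fun φ : MulAut (P : Subgroup G) => ((φ a : (P : Subgroup G)) : G)) hφ
    simpa [MulAut.conjNormal_apply] using this
  -- zpowers y is a Sylow 3-subgroup
  have hQcard : Nat.card (Subgroup.zpowers y) = 3 ^ (Nat.card G).factorization 3 := by
    rw [Nat.card_zpowers, hy, hfac3, pow_one]
  set Q : Sylow 3 G := Sylow.ofCard (Subgroup.zpowers y) hQcard with hQ
  have hQcoe : (Q : Subgroup G) = Subgroup.zpowers y := rfl
  set N := Subgroup.normalizer ((Q : Subgroup G) : Set G) with hN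
  have hyN : Subgroup.zpowers y ≤ N := hQcoe ▸ Subgroup.le_normalizer
  have hPN : (P : Subgroup G) ≤ N := by
    intro a ha
    have hcomm : Commute y a := by
      have h1 : y * a * y⁻¹ = a := hconj ⟨a, ha⟩
      exact mul_inv_eq_iff_eq_mul.mp h1
    rw [hN, Subgroup.mem_normalizer_iff]
    intro n
    have key : ∀ m ∈ (Q : Subgroup G), a * m * a⁻¹ = m := by
      intro m hm
      rw [hQcoe, Subgroup.mem_zpowers_iff] at hm
      obtain ⟨k, rfl⟩ := hm
      have : Commute (y ^ k) a := hcomm.zpow_left k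
      rw [← this.eq, mul_assoc, mul_inv_cancel, mul_one]
    constructor
    · intro hn; rw [key n hn]; exact hn
    · intro hn
      have h3 := key _ hn
      have h4 : a * (a * n * a⁻¹) = a * n := mul_right_cancel h3
      have h5 : a * n * a⁻¹ = n := mul_left_cancel h4
      rw [← h5]; exact hn
  -- the normalizer has index 1
  have h3N : (3 : ℕ) ∣ Nat.card N := by
    have := Subgroup.card_dvd_of_le hyN
    rwa [Nat.card_zpowers, hy] at this
  have hpN : p ∣ Nat.card N := hPcard ▸ Subgroup.card_dvd_of_le hPN
  have hco : Nat.Coprime 3 p :=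
    (Nat.coprime_primes (by norm_num) hp).mpr (by omega)
  have h3pN : 3 * p ∣ Nat.card N := hco.mul_dvd_of_dvd_of_dvd h3N hpN
  obtain ⟨k, hk⟩ := h3pN
  have hNi := Subgroup.card_mul_index N
  rw [hG, hk] at hNi
  have hki : k * N.index = 2 := by
    have hppos : 0 < p := hp.pos
    nlinarith [hNi]
  have hidx : N.index = 1 := by
    have hmod : Nat.card (Sylow 3 G) % 3 = 1 % 3 := card_sylow_modEq_one 3 G
    have hcardS : Nat.card (Sylow 3 G) = N.index := Sylow.card_eq_index_normalizer Q
    have hd : N.index ∣ 2 := Dvd.intro_left k hki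
    rcases Nat.prime_two.eq_one_or_self_of_dvd _ hd with h | h <;> omega
  have hQnormal : (Subgroup.zpowers y).Normal := by
    rw [← hQcoe, ← Subgroup.normalizer_eq_top_iff, ← Subgroup.index_eq_one]
    exact hidx
  haveI := hQnormal
  -- finish: the closure is contained in a subgroup of size at most 6
  have hle : (⊤ : Subgroup G) ≤ Subgroup.zpowers x ⊔ Subgroup.zpowers y := by
    rw [← hclo, Subgroup.closure_le]
    rintro z (rfl | rfl)
    · exact Subgroup.mem_sup_left (Subgroup.mem_zpowers _)
    · exact Subgroup.mem_sup_right (Subgroup.mem_zpowers _)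
  have htop : Subgroup.zpowers x ⊔ Subgroup.zpowers y = ⊤ := le_antisymm le_top hle
  have hsmall : Nat.card (Subgroup.zpowers x ⊔ Subgroup.zpowers y : Subgroup G) ≤ 6 := by
    have hset := Subgroup.mul_normal (Subgroup.zpowers x) (Subgroup.zpowers y)
    calc Nat.card (Subgroup.zpowers x ⊔ Subgroup.zpowers y : Subgroup G)
        = Nat.card ((Subgroup.zpowers x : Set G) * (Subgroup.zpowers y : Set G)) := by
          rw [← hset]; rfl
      _ ≤ Nat.card (Subgroup.zpowers x : Set G) * Nat.card (Subgroup.zpowers y : Set G) :=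
          Set.natCard_mul_le
      _ = 6 := by
          simp only [SetLike.coe_sort_coe, Nat.card_zpowers, hx, hy]
  rw [htop, Subgroup.card_top, hG] at hsmall
  omega
end

section
/- Let p be a prime with p ≡ 11 (mod 12). Then there is no finite group G of order 4p that is generated by an element of order 2 together with an element of order 4. -/
theorem stmt_2 (p : ℕ) (hp : p.Prime) (hp12 : p % 12 = 11) :
    ¬ ∃ (G : Type) (_ : Group G) (_ : Fintype G),
      Fintype.card G = 4 * p ∧
      ∃ x y : G, orderOf x = 2 ∧ orderOf y = 4 ∧
        Subgroup.closure ({x, y} : Set G) = ⊤ := by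
  rintro ⟨G, _, _, hcard, x, y, hx, hy, hgen⟩
  have hp' : Fact p.Prime := ⟨hp⟩
  have hp11 : 11 ≤ p := by omega
  have hcard' : Nat.card G = 4 * p := by rw [Nat.card_eq_fintype_card, hcard]
  -- A Sylow p-subgroup
  obtain ⟨P⟩ : Nonempty (Sylow p G) := inferInstance
  have hPcard : Nat.card P = p := by
    rw [Sylow.card_eq_multiplicity, hcard']
    have h40 : (4 : ℕ).factorization p = 0 := by
      apply Nat.factorization_eq_zero_of_not_dvd
      intro h; have := Nat.le_of_dvd (by norm_num) h; omega
    rw [Nat.factorization_mul (by norm_num) hp.ne_zero]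
    simp [h40, hp.factorization]
  -- index of P is 4
  have hindex : (P : Subgroup G).index = 4 := by
    have h := Subgroup.card_mul_index (P : Subgroup G)
    rw [hPcard, hcard'] at h
    have hp0 : 0 < p := hp.pos
    nlinarith [h]
  -- number of Sylow p-subgroups is 1, so P is normal
  have hone : Nat.card (Sylow p G) = 1 := by
    have h1 : Nat.card (Sylow p G) ∣ 4 := hindex ▸ P.card_dvd_index
    have h2 : Nat.card (Sylow p G) % p = 1 % p := card_sylow_modEq_one p G
    have h3 : Nat.card (Sylow p G) ≤ 4 := Nat.le_of_dvd (by norm_num) h1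
    rw [Nat.mod_eq_of_lt (by omega), Nat.mod_eq_of_lt (by omega)] at h2
    exact h2
  have hsub : Subsingleton (Sylow p G) := (Nat.card_eq_one_iff_unique.mp hone).1
  have hnorm : (P : Subgroup G).Normal := by
    rw [← Subgroup.normalizer_eq_top_iff, eq_top_iff]
    intro g _
    rw [P.coe_coe, ← Sylow.smul_eq_iff_mem_normalizer]
    exact hsub.elim _ _
  set N : Subgroup G := (P : Subgroup G) with hN
  -- the quotient has order 4
  let π : G →* G ⧸ N := QuotientGroup.mk' N
  have hQcard : Nat.card (G ⧸ N) = 4 := by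
    have h := Subgroup.card_eq_card_quotient_mul_card_subgroup N
    rw [hcard', hPcard] at h
    have hp0 : 0 < p := hp.pos
    nlinarith [h]
  have hQfin : Finite (G ⧸ N) := Quotient.finite _
  have hx2 : x ^ 2 = 1 := by rw [← hx]; exact pow_orderOf_eq_one x
  have hy4 : y ^ 4 = 1 := by rw [← hy]; exact pow_orderOf_eq_one y
  -- order-2 elements are not in N
  have hnotN : ∀ z : G, orderOf z = 2 → z ∉ N := by
    intro z hz h
    have hdvd : orderOf z ∣ Nat.card N := N.orderOf_dvd_natCard h
    rw [hz, hPcard] at hdvd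
    omega
  have hy2 : y ^ 2 ∉ N := by
    apply hnotN
    rw [orderOf_pow, hy]; norm_num
  -- the image of y has order 4
  have hπy2 : (π y) ^ 2 ≠ 1 := by
    intro h
    apply hy2
    have h2 : π (y ^ 2) = 1 := by rw [map_pow]; exact h
    exact (QuotientGroup.eq_one_iff _).mp h2
  have hyQ : orderOf (π y) = 4 := by
    have hdvd : orderOf (π y) ∣ 4 := hy ▸ orderOf_map_dvd π y
    have h4 : orderOf (π y) ≤ 4 := Nat.le_of_dvd (by norm_num) hdvd
    have h0 : 0 < orderOf (π y) := orderOf_pos (π y)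
    interval_cases h : orderOf (π y)
    · exact absurd (by rw [orderOf_eq_one_iff.mp h, one_pow]) hπy2
    · exact absurd (by rw [← h]; exact pow_orderOf_eq_one (π y)) hπy2
    · exact absurd hdvd (by norm_num)
    · rfl
  -- the quotient is cyclic generated by π y
  have htop : Subgroup.zpowers (π y) = ⊤ := by
    apply Subgroup.eq_top_of_card_eq
    rw [Nat.card_zpowers, hyQ, hQcard]
  obtain ⟨k, hk⟩ : ∃ k : ℤ, (π y) ^ k = π x :=
    Subgroup.mem_zpowers_iff.mp (htop ▸ Subgroup.mem_top (π x))
  -- k is even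
  have hk2 : (4 : ℤ) ∣ 2 * k := by
    have hzp : (π y) ^ (2 * k) = 1 := by
      rw [mul_comm, zpow_mul, hk,
        show ((2:ℤ)) = ((2:ℕ):ℤ) from rfl, zpow_natCast, ← map_pow, hx2, map_one]
    have h4k : ((orderOf (π y) : ℤ)) ∣ 2 * k := orderOf_dvd_iff_zpow_eq_one.mpr hzp
    rw [hyQ] at h4k
    exact_mod_cast h4k
  obtain ⟨m, hm⟩ : ∃ m : ℤ, k = 2 * m := ⟨k / 2, by omega⟩
  -- π x = ((π y)^2)^m
  have hπx : π x = ((π y) ^ 2) ^ m := by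
    rw [← hk, hm, zpow_mul]
    norm_cast
  have hπy4 : (π y) ^ (4 : ℤ) = 1 := by
    rw [show ((4:ℤ)) = ((4:ℕ):ℤ) by norm_num, zpow_natCast, ← hyQ, pow_orderOf_eq_one]
  -- split on parity of m
  rcases Int.even_or_odd m with ⟨t, ht⟩ | ⟨t, ht⟩
  · -- m even : x ∈ N, impossible
    have : π x = 1 := by
      rw [hπx, ht, ← two_mul, ← zpow_natCast (π y) 2, ← zpow_mul,
        show ((2:ℕ):ℤ) * (2 * t) = 4 * t by push_cast; ring, zpow_mul, hπy4, one_zpow]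
    exact hnotN x hx (QuotientGroup.eq_one_iff x |>.mp this)
  · -- m odd : x = a * y^2 with a ∈ N
    have hπxy2 : π x = π (y ^ 2) := by
      rw [hπx, ht, ← zpow_natCast (π y) 2, ← zpow_mul,
        show ((2:ℕ):ℤ) * (2 * t + 1) = 4 * t + 2 by push_cast; ring,
        show (4 * t + 2 : ℤ) = 4 * t + 2 from rfl, zpow_add, zpow_mul, hπy4, one_zpow, one_mul,
        show ((2:ℤ)) = ((2:ℕ):ℤ) from rfl, zpow_natCast, map_pow]
    set a : G := x * (y ^ 2)⁻¹ with ha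
    have haN : a ∈ N := by
      rw [← QuotientGroup.eq_one_iff (G := G) (N := N)]
      show π (x * (y ^ 2)⁻¹) = 1
      rw [map_mul, map_inv, hπxy2, mul_inv_cancel]
    have hxa : x = a * y ^ 2 := by rw [ha]; group
    -- a ≠ 1, else G = ⟨y⟩ has order ≤ 4
    have ha1 : a ≠ 1 := by
      intro h
      have hxy2 : x = y ^ 2 := by rw [hxa, h, one_mul]
      have hle : Subgroup.closure ({x, y} : Set G) ≤ Subgroup.zpowers y := by
        rw [Subgroup.closure_le]
        rintro z (rfl | rfl)
        · exact Subgroup.mem_zpowers_iff.mpr ⟨(2 : ℤ), by rw [hxy2]; norm_cast⟩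
        · exact Subgroup.mem_zpowers _
      rw [hgen] at hle
      have h1 : Subgroup.zpowers y = ⊤ := top_le_iff.mp hle
      have h2 : Nat.card (Subgroup.zpowers y) = 4 := by rw [Nat.card_zpowers, hy]
      rw [h1, Subgroup.card_top, hcard'] at h2
      omega
    -- a has order p and generates N
    have hordera : orderOf a = p := by
      have hdvd : orderOf a ∣ p := hPcard ▸ N.orderOf_dvd_natCard haN
      rcases (Nat.Prime.eq_one_or_self_of_dvd hp _ hdvd) with h | h
      · exact absurd (orderOf_eq_one_iff.mp h) ha1
      · exact h
    have hZN : Subgroup.zpowers a = N := by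
      apply Subgroup.eq_of_le_of_card_ge (Subgroup.zpowers_le.mpr haN)
      rw [Nat.card_zpowers, hordera, hPcard]
    -- conjugation of a by y
    have hconjN : y * a * y⁻¹ ∈ Subgroup.zpowers a := hZN ▸ hnorm.conj_mem a haN y
    obtain ⟨c, hc⟩ : ∃ c : ℤ, a ^ c = y * a * y⁻¹ := Subgroup.mem_zpowers_iff.mp hconjN
    -- y^2 a y^-2 = a^(c*c)
    have hconj2 : y ^ 2 * a * (y ^ 2)⁻¹ = a ^ (c * c) := by
      calc y ^ 2 * a * (y ^ 2)⁻¹ = y * (y * a * y⁻¹) * y⁻¹ := by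
            rw [pow_two, mul_inv_rev]; group
        _ = y * a ^ c * y⁻¹ := by rw [← hc]
        _ = (y * a * y⁻¹) ^ c := conj_zpow.symm
        _ = (a ^ c) ^ c := by rw [← hc]
        _ = a ^ (c * c) := by rw [← zpow_mul]
    -- compute x^2
    have hx2' : a ^ (1 + c * c) = 1 := by
      have : x ^ 2 = a ^ (1 + c * c) * y ^ 4 := by
        calc x ^ 2 = a * (y ^ 2 * a * (y ^ 2)⁻¹) * (y ^ 2 * y ^ 2) := by
              rw [hxa, pow_two]; group
          _ = a * a ^ (c * c) * y ^ 4 := by rw [hconj2]; group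
          _ = a ^ (1 + c * c) * y ^ 4 := by rw [zpow_add, zpow_one]
      rw [hx2, hy4, mul_one] at this
      exact this.symm
    -- so p ∣ 1 + c², contradicting p ≡ 3 mod 4
    have hdvd : (p : ℤ) ∣ 1 + c * c := by
      rw [← hordera]
      exact orderOf_dvd_iff_zpow_eq_one.mpr hx2'
    have hzero : ((1 + c * c : ℤ) : ZMod p) = 0 :=
      (ZMod.intCast_zmod_eq_zero_iff_dvd _ p).mpr hdvd
    have hsq : IsSquare (-1 : ZMod p) := by
      refine ⟨(c : ZMod p), ?_⟩
      push_cast at hzero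
      linear_combination -hzero
    have := ZMod.exists_sq_eq_neg_one_iff.mp hsq
    omega
end

section
/- Let p be a prime with p > 12. Then there is no finite group G of order 12p that is generated by an element of order 2 together with an element of order 3. -/
open Subgroup

-- range of hom from 2-generated group
lemma aux_range {G M : Type*} [Group G] [Group M] (f : G →* M) {x y : G}
    (h : Subgroup.closure ({x, y} : Set G) = ⊤) :
    f.range = Subgroup.closure {f x, f y} := by
  rw [MonoidHom.range_eq_map, ← h, MonoidHom.map_closure, Set.image_pair]

lemma aux_closure_one {M : Type*} [Group M] (m : M) :
    Subgroup.closure ({1, m} : Set M) = Subgroup.zpowers m := by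
  rw [zpowers_eq_closure]
  apply le_antisymm
  · rw [closure_le]
    rintro z (rfl | rfl)
    · exact one_mem _
    · exact subset_closure rfl
  · exact closure_mono (by simp)


lemma aux_map_normal {G : Type*} [Group G] [Finite G] {q : ℕ} [Fact q.Prime]
    (N : Subgroup G) [N.Normal] (S : Sylow q ↥N) (hS : (S : Subgroup ↥N).Normal) :
    ((S : Subgroup ↥N).map N.subtype).Normal := by
  rw [← normalizer_eq_top_iff, ← top_le_iff, ← Sylow.normalizer_sup_eq_top (N := N) S, sup_le_iff]
  refine ⟨le_rfl, fun n hn => ?_⟩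
  rw [Subgroup.mem_normalizer_iff]
  intro h
  constructor
  · rintro ⟨h₀, hh₀, rfl⟩
    exact ⟨⟨n, hn⟩ * h₀ * ⟨n, hn⟩⁻¹, hS.conj_mem h₀ hh₀ ⟨n, hn⟩, by simp⟩
  · rintro ⟨h₀, hh₀, hh⟩
    refine ⟨⟨n, hn⟩⁻¹ * h₀ * ⟨n, hn⟩, ?_, ?_⟩
    · have := hS.conj_mem h₀ hh₀ ⟨n, hn⟩⁻¹; rw [inv_inv] at this; exact this
    · have : (h₀ : G) = n * h * n⁻¹ := hh ▸ rfl
      simp [this]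
      group

lemma aux_sylow_normal {G : Type*} [Group G] {q : ℕ} [Fact q.Prime] [Finite (Sylow q G)]
    (S : Sylow q G) (h : Nat.card (Sylow q G) = 1) : (S : Subgroup G).Normal := by
  rw [← normalizer_eq_top_iff, ← Subgroup.index_eq_one]
  exact (Sylow.card_eq_index_normalizer S).symm.trans h

lemma aux_mem_sylow {G : Type*} [Group G] [Finite G] {q : ℕ} [Fact q.Prime]
    (S : Sylow q G) [Subsingleton (Sylow q G)] {g : G} (hg : g ^ q = 1) :
    g ∈ (S : Subgroup G) := by
  have h1 : IsPGroup q (Subgroup.zpowers g) := by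
    intro z
    refine ⟨1, ?_⟩
    have hz : ((z : G)) ^ q = 1 := by
      obtain ⟨k, hk⟩ := z.2
      rw [← hk, ← zpow_natCast, ← zpow_mul, mul_comm, zpow_mul, zpow_natCast, hg, one_zpow]
    rw [pow_one]
    exact Subtype.ext (by simpa using hz)
  obtain ⟨T, hT⟩ := h1.exists_le_sylow
  have : T = S := Subsingleton.elim _ _
  exact this ▸ hT (Subgroup.mem_zpowers g)

theorem stmt_5 (p : ℕ) (hp : p.Prime) (hp12 : 12 < p) :
    ¬ ∃ (G : Type) (_ : Group G) (_ : Fintype G),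
      Fintype.card G = 12 * p ∧
      ∃ x y : G, orderOf x = 2 ∧ orderOf y = 3 ∧
        Subgroup.closure ({x, y} : Set G) = ⊤ := by
  rintro ⟨G, _, _, hcard, x, y, hx, hy, hxy⟩
  haveI : Fact p.Prime := ⟨hp⟩
  have hp0 : p ≠ 0 := hp.ne_zero
  have hx2 : x ^ 2 = 1 := hx ▸ pow_orderOf_eq_one x
  have hy3 : y ^ 3 = 1 := hy ▸ pow_orderOf_eq_one y
  have hpndvd12 : ¬ p ∣ 12 := fun h => absurd (Nat.le_of_dvd (by norm_num) h) (by omega)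
  have hcardN : Nat.card G = 12 * p := by rw [Nat.card_eq_fintype_card, hcard]
  obtain ⟨P⟩ : Nonempty (Sylow p G) := inferInstance
  have hfact : (Nat.card G).factorization p = 1 := by
    rw [hcardN, Nat.factorization_mul (by norm_num) hp0]
    simp [Nat.factorization_eq_zero_of_not_dvd hpndvd12, hp.factorization_self]
  have hPcard : Nat.card ↥(P : Subgroup G) = p := by
    rw [Sylow.card_eq_multiplicity, hfact, pow_one]
  have hPindex : (P : Subgroup G).index = 12 := by
    have h := Subgroup.card_mul_index (P : Subgroup G)
    rw [hPcard, hcardN] at h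
    have : p * (P : Subgroup G).index = p * 12 := by omega
    exact Nat.eq_of_mul_eq_mul_left (by omega) this
  have hnp : Nat.card (Sylow p G) = 1 := by
    have h1 := card_sylow_modEq_one p G
    have h2 := Sylow.card_dvd_index P
    rw [hPindex] at h2
    have hle : Nat.card (Sylow p G) ≤ 12 := Nat.le_of_dvd (by norm_num) h2
    rwa [Nat.ModEq, Nat.mod_eq_of_lt (by omega), Nat.mod_eq_of_lt (by omega)] at h1
  haveI hPnormal : (P : Subgroup G).Normal := aux_sylow_normal P hnp
  haveI : Subsingleton (Sylow p G) := (Sylow.unique_of_normal P hPnormal).instSubsingleton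
  haveI : IsCyclic ↥(P : Subgroup G) := isCyclic_of_prime_card hPcard
  set ψ : G →* MulAut ↥(P : Subgroup G) := MulAut.conjNormal with hψdef
  have hψP : ∀ g ∈ (P : Subgroup G), ψ g = 1 := by
    intro g hg
    letI := IsCyclic.commGroup (α := ↥(P : Subgroup G))
    ext h
    have hcm : ((⟨g, hg⟩ : ↥(P : Subgroup G)) * h : ↥(P : Subgroup G))
        = h * ⟨g, hg⟩ := mul_comm _ _
    have hcm' : g * (h : G) = (h : G) * g := congrArg Subtype.val hcm
    show ((ψ g) h : G) = ((1 : MulAut ↥(P : Subgroup G)) h : G)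
    rw [hψdef]
    simp only [MulAut.conjNormal_apply, MulAut.one_apply]
    rw [hcm']
    group
  have hcomm : ∀ a b : MulAut ↥(P : Subgroup G), a * b = b * a := by
    intro a b
    obtain ⟨m, hm⟩ := MonoidHom.map_cyclic a.toMonoidHom
    obtain ⟨n, hn⟩ := MonoidHom.map_cyclic b.toMonoidHom
    have ha : ∀ z : ↥(P : Subgroup G), a z = z ^ m := hm
    have hb : ∀ z : ↥(P : Subgroup G), b z = z ^ n := hn
    ext z
    have h : a (b z) = b (a z) := by rw [ha, hb, ha, hb, ← zpow_mul, ← zpow_mul, mul_comm]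
    simpa [MulAut.mul_apply] using congrArg Subtype.val h
  set cube : MulAut ↥(P : Subgroup G) →* MulAut ↥(P : Subgroup G) :=
    { toFun := fun a => a ^ 3
      map_one' := one_pow 3
      map_mul' := fun a b => Commute.mul_pow (hcomm a b) 3 } with hcubedef
  set θ : G →* MulAut ↥(P : Subgroup G) := cube.comp ψ with hθdef
  have hθy : θ y = 1 := by
    show ψ y ^ 3 = 1
    rw [← map_pow, hy3, map_one]
  have hθx : θ x = ψ x := by
    show ψ x ^ 3 = ψ x
    rw [← map_pow, pow_succ, hx2, one_mul]
  have hθP : ∀ g ∈ (P : Subgroup G), θ g = 1 := by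
    intro g hg
    show ψ g ^ 3 = 1
    rw [hψP g hg, one_pow]
  by_cases hψx : ψ x = 1
  · by_cases hψy : ψ y = 1
    · -- Case 2a : P is central, use Burnside transfer on G
      have htriv : ∀ g : G, ψ g = 1 := by
        have hr : ψ.range = ⊥ := by
          rw [aux_range ψ hxy, hψx, hψy, Set.pair_eq_singleton, closure_singleton_one]
        intro g
        have hg : ψ g ∈ ψ.range := ⟨g, rfl⟩
        rwa [hr, Subgroup.mem_bot] at hg
      have hcent : Subgroup.normalizer ((P : Subgroup G) : Set G) ≤
          Subgroup.centralizer ((P : Subgroup G) : Set G) := by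
        intro g _
        rw [Subgroup.mem_centralizer_iff]
        intro h hh
        have h1 : ((ψ g) ⟨h, hh⟩ : G) = h := by rw [htriv g]; rfl
        rw [hψdef] at h1
        simp only [MulAut.conjNormal_apply] at h1
        calc h * g = (g * h * g⁻¹) * g := by rw [h1]
        _ = g * h := by group
      have hcompl := MonoidHom.ker_transferSylow_isComplement' P hcent
      set τ := MonoidHom.transferSylow P hcent with hτdef
      have hxk : x ∈ τ.ker := by
        rw [MonoidHom.mem_ker, ← orderOf_eq_one_iff]
        have h1 : orderOf (τ x) ∣ 2 := hx ▸ orderOf_map_dvd τ x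
        have h2 : orderOf (τ x) ∣ p := by
          have h := orderOf_dvd_natCard (τ x); rwa [hPcard] at h
        have h3 := Nat.dvd_gcd h1 h2
        rwa [Nat.Coprime.gcd_eq_one
          ((Nat.coprime_primes Nat.prime_two hp).mpr (by omega)), Nat.dvd_one] at h3
      have hyk : y ∈ τ.ker := by
        rw [MonoidHom.mem_ker, ← orderOf_eq_one_iff]
        have h1 : orderOf (τ y) ∣ 3 := hy ▸ orderOf_map_dvd τ y
        have h2 : orderOf (τ y) ∣ p := by
          have h := orderOf_dvd_natCard (τ y); rwa [hPcard] at h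
        have h3 := Nat.dvd_gcd h1 h2
        rwa [Nat.Coprime.gcd_eq_one
          ((Nat.coprime_primes Nat.prime_three hp).mpr (by omega)), Nat.dvd_one] at h3
      have hker : τ.ker = ⊤ := by
        rw [← top_le_iff, ← hxy, closure_le]
        rintro z (rfl | rfl)
        · exact hxk
        · exact hyk
      have hcm := hcompl.card_mul
      rw [hker, card_top, hPcard, hcardN] at hcm
      nlinarith
    · -- Case 2b : x centralizes P, y acts with order 3
      have hψy3 : ψ y ^ 3 = 1 := by rw [← map_pow, hy3, map_one]
      have hordψy : orderOf (ψ y) = 3 := orderOf_eq_prime hψy3 hψy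
      have hrange : ψ.range = zpowers (ψ y) := by
        rw [aux_range ψ hxy, hψx, aux_closure_one]
      have hCindex : ψ.ker.index = 3 := by
        rw [Subgroup.index_ker, hrange, Nat.card_zpowers, hordψy]
      have hCcard : Nat.card ↥ψ.ker = 4 * p := by
        have h := Subgroup.card_mul_index ψ.ker
        rw [hCindex, hcardN] at h
        omega
      have hPC : (P : Subgroup G) ≤ ψ.ker := fun g hg => MonoidHom.mem_ker.mpr (hψP g hg)
      have hfactC : (Nat.card ↥ψ.ker).factorization p = 1 := by
        rw [hCcard, Nat.factorization_mul (by norm_num) hp0]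
        have h4 : ¬ p ∣ 4 := fun h => absurd (Nat.le_of_dvd (by norm_num) h) (by omega)
        simp [Nat.factorization_eq_zero_of_not_dvd h4, hp.factorization_self]
      have hPCcard : Nat.card ↥((P : Subgroup G).subgroupOf ψ.ker) = p := by
        rw [Nat.card_congr (subgroupOfEquivOfLe hPC).toEquiv, hPcard]
      set SC : Sylow p ↥ψ.ker :=
        Sylow.ofCard ((P : Subgroup G).subgroupOf ψ.ker)
          (by rw [hPCcard, hfactC, pow_one]) with hSCdef
      have hcent2 : Subgroup.normalizer ((SC : Subgroup ↥ψ.ker) : Set ↥ψ.ker) ≤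
          Subgroup.centralizer ((SC : Subgroup ↥ψ.ker) : Set ↥ψ.ker) := by
        intro c _
        rw [Subgroup.mem_centralizer_iff]
        intro h hh
        obtain ⟨cg, hcgmem⟩ := c
        obtain ⟨hg, hgmem⟩ := h
        have hhP : hg ∈ (P : Subgroup G) := by
          have hh' : (⟨hg, hgmem⟩ : ↥ψ.ker) ∈ (P : Subgroup G).subgroupOf ψ.ker := hh
          exact Subgroup.mem_subgroupOf.mp hh'
        have hc1 : ψ cg = 1 := hcgmem
        have h1 : ((ψ cg) ⟨hg, hhP⟩ : G) = hg := by rw [hc1]; rfl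
        rw [hψdef] at h1
        simp only [MulAut.conjNormal_apply] at h1
        refine Subtype.ext ?_
        show hg * cg = cg * hg
        calc hg * cg = (cg * hg * cg⁻¹) * cg := by rw [h1]
        _ = cg * hg := by group
      have hcompl := MonoidHom.ker_transferSylow_isComplement' SC hcent2
      set τ := MonoidHom.transferSylow SC hcent2 with hτdef
      have hKcard : Nat.card ↥τ.ker = 4 := by
        have h := hcompl.card_mul
        rw [show Nat.card ↥(SC : Subgroup ↥ψ.ker) = p from hPCcard, hCcard] at h
        exact Nat.eq_of_mul_eq_mul_right (by omega) h
      haveI : Fact (Nat.Prime 2) := ⟨Nat.prime_two⟩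
      have hfact2 : (Nat.card ↥ψ.ker).factorization 2 = 2 := by
        rw [hCcard, Nat.factorization_mul (by norm_num) hp0]
        have hodd : ¬ (2 ∣ p) := fun h =>
          absurd ((Nat.prime_dvd_prime_iff_eq Nat.prime_two hp).mp h) (by omega)
        rw [Finsupp.add_apply, Nat.factorization_eq_zero_of_not_dvd hodd,
          show (4 : ℕ) = 2 ^ 2 by norm_num, Nat.Prime.factorization_pow Nat.prime_two,
          Finsupp.single_eq_same]
      set K2 : Sylow 2 ↥ψ.ker := Sylow.ofCard τ.ker (by rw [hKcard, hfact2]; norm_num)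
        with hK2def
      have hK2normal : (K2 : Subgroup ↥ψ.ker).Normal := MonoidHom.normal_ker τ
      set T : Subgroup G := (K2 : Subgroup ↥ψ.ker).map ψ.ker.subtype with hTdef
      haveI hTnormal : T.Normal := aux_map_normal ψ.ker K2 hK2normal
      have hTcard : Nat.card ↥T = 4 := by
        rw [← hKcard]
        exact (Nat.card_congr (Subgroup.equivMapOfInjective _ ψ.ker.subtype
          ψ.ker.subtype_injective).toEquiv).symm
      have hTindex : T.index = 3 * p := by
        have h := Subgroup.card_mul_index T
        rw [hTcard, hcardN] at h
        omega
      have hQcard : Nat.card (G ⧸ T) = 3 * p := by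
        rw [← Subgroup.index_eq_card, hTindex]
      set π : G →* G ⧸ T := QuotientGroup.mk' T with hπdef
      have hπx : π x = 1 := by
        rw [← orderOf_eq_one_iff]
        have h1 : orderOf (π x) ∣ 2 := hx ▸ orderOf_map_dvd π x
        have h2 : orderOf (π x) ∣ 3 * p := by
          have h := orderOf_dvd_natCard (π x); rwa [hQcard] at h
        rcases (Nat.dvd_prime Nat.prime_two).mp h1 with h | h
        · exact h
        · exfalso
          rw [h] at h2
          rcases (Nat.Prime.dvd_mul Nat.prime_two).mp h2 with h' | h'
          · norm_num at h'
          · exact absurd ((Nat.prime_dvd_prime_iff_eq Nat.prime_two hp).mp h') (by omega)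
      have htop : (⊤ : Subgroup (G ⧸ T)) = zpowers (π y) := by
        rw [← MonoidHom.range_eq_top_of_surjective π (QuotientGroup.mk'_surjective T),
          aux_range π hxy, hπx, aux_closure_one]
      have hcard3 : Nat.card (G ⧸ T) = orderOf (π y) := by
        rw [← Nat.card_zpowers, ← htop, card_top]
      have hdvd : orderOf (π y) ∣ 3 :=
        orderOf_dvd_of_pow_eq_one (by rw [← map_pow, hy3, map_one])
      rw [← hcard3, hQcard] at hdvd
      have := Nat.le_of_dvd (by norm_num) hdvd
      omega
  · -- Case 1 : x acts nontrivially on P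
    set π : G →* G ⧸ (P : Subgroup G) := QuotientGroup.mk' (P : Subgroup G) with hπdef
    set a := π x with hadef
    set b := π y with hbdef
    have hπtop : π.range = ⊤ :=
      MonoidHom.range_eq_top_of_surjective π (QuotientGroup.mk'_surjective _)
    have hclosQ : Subgroup.closure ({a, b} : Set (G ⧸ (P : Subgroup G))) = ⊤ := by
      rw [← aux_range π hxy, hπtop]
    have hQcard : Nat.card (G ⧸ (P : Subgroup G)) = 12 := by
      rw [← Subgroup.index_eq_card, hPindex]
    set θbar := QuotientGroup.lift (P : Subgroup G) θ hθP with hθbardef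
    have hθbarπ : ∀ g : G, θbar (π g) = θ g := fun g => rfl
    have hrangeθbar : θbar.range = zpowers (ψ x) := by
      rw [aux_range θbar hclosQ, hadef, hbdef, hθbarπ, hθbarπ, hθx, hθy,
        Set.pair_comm, aux_closure_one]
    have hordψx : orderOf (ψ x) = 2 :=
      orderOf_eq_prime (by rw [← map_pow, hx2, map_one]) hψx
    have hNindex : θbar.ker.index = 2 := by
      rw [Subgroup.index_ker, hrangeθbar, Nat.card_zpowers, hordψx]
    have hNcard : Nat.card ↥θbar.ker = 6 := by
      have h := Subgroup.card_mul_index θbar.ker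
      rw [hNindex, hQcard] at h
      omega
    have hbN : b ∈ θbar.ker := by rw [MonoidHom.mem_ker, hbdef, hθbarπ, hθy]
    have haN : a ∉ θbar.ker := by
      rw [MonoidHom.mem_ker, hadef, hθbarπ, hθx]; exact hψx
    haveI : Fact (Nat.Prime 3) := ⟨Nat.prime_three⟩
    obtain ⟨S₀⟩ : Nonempty (Sylow 3 ↥θbar.ker) := inferInstance
    have hS₀card : Nat.card ↥(S₀ : Subgroup ↥θbar.ker) = 3 := by
      rw [Sylow.card_eq_multiplicity, hNcard,
        show (6 : ℕ) = 2 * 3 by norm_num,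
        Nat.factorization_mul (by norm_num) (by norm_num)]
      simp [Nat.factorization_eq_zero_of_not_dvd (by norm_num : ¬ (3 : ℕ) ∣ 2),
        Nat.prime_three.factorization_self]
    have hS₀index : (S₀ : Subgroup ↥θbar.ker).index = 2 := by
      have h := Subgroup.card_mul_index (S₀ : Subgroup ↥θbar.ker)
      rw [hS₀card, hNcard] at h
      omega
    have hn₃ : Nat.card (Sylow 3 ↥θbar.ker) = 1 := by
      have h1 := card_sylow_modEq_one 3 ↥θbar.ker
      have h2 := Sylow.card_dvd_index S₀
      rw [hS₀index] at h2
      rw [Nat.ModEq] at h1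
      rcases (Nat.dvd_prime Nat.prime_two).mp h2 with h | h
      · exact h
      · rw [h] at h1; norm_num at h1
    have hS₀normal := aux_sylow_normal S₀ hn₃
    haveI : Subsingleton (Sylow 3 ↥θbar.ker) :=
      (Sylow.unique_of_normal S₀ hS₀normal).instSubsingleton
    set S : Subgroup (G ⧸ (P : Subgroup G)) :=
      (S₀ : Subgroup ↥θbar.ker).map θbar.ker.subtype with hSdef
    have hbS : b ∈ S := by
      have hb3 : (⟨b, hbN⟩ : ↥θbar.ker) ^ 3 = 1 := by
        refine Subtype.ext ?_
        push_cast
        rw [hbdef, ← map_pow, hy3, map_one]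
      exact ⟨⟨b, hbN⟩, aux_mem_sylow S₀ hb3, rfl⟩
    haveI hSnormal : S.Normal := aux_map_normal θbar.ker S₀ hS₀normal
    have hScard : Nat.card ↥S = 3 := by
      rw [← hS₀card]
      exact (Nat.card_congr (Subgroup.equivMapOfInjective _ θbar.ker.subtype
        θbar.ker.subtype_injective).toEquiv).symm
    have hSindex : S.index = 4 := by
      have h := Subgroup.card_mul_index S
      rw [hScard, hQcard] at h
      omega
    set π2 := QuotientGroup.mk' S with hπ2def
    have hπ2b : π2 b = 1 := by
      rw [← MonoidHom.mem_ker, QuotientGroup.ker_mk']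
      exact hbS
    have ha2 : a ^ 2 = 1 := by rw [hadef, ← map_pow, hx2, map_one]
    have htop2 : (⊤ : Subgroup ((G ⧸ (P : Subgroup G)) ⧸ S)) = zpowers (π2 a) := by
      rw [← MonoidHom.range_eq_top_of_surjective π2 (QuotientGroup.mk'_surjective S),
        aux_range π2 hclosQ, hπ2b, Set.pair_comm (π2 a) 1, aux_closure_one]
    have hord : orderOf (π2 a) ∣ 2 :=
      orderOf_dvd_of_pow_eq_one (by rw [← map_pow, ha2, map_one])
    have hc : Nat.card ((G ⧸ (P : Subgroup G)) ⧸ S) = orderOf (π2 a) := by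
      rw [← Nat.card_zpowers, ← htop2, card_top]
    rw [← Subgroup.index_eq_card, hSindex] at hc
    rw [← hc] at hord
    norm_num at hord
end

section
/- Let p be a prime with p ≡ 1 (mod 6). Then there exist a finite group G of order 6p and a surjective group homomorphism φ from the free product ℤ/2 ∗ ℤ/3 onto G whose kernel is torsion-free. (One may take G to be a semidirect product ℤ/p ⋊ ℤ/6 where a generator t of ℤ/6 acts on ℤ/p by an automorphism of order 6.) -/
open Monoid
open scoped Monoid.Coprod

/-- The older Mathlib's `Monoid.IsTorsionFree`, removed since: the only element of finite order is `1`. -/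
def Monoid.IsTorsionFree (G : Type*) [Monoid G] : Prop :=
  ∀ g : G, g ≠ 1 → ¬IsOfFinOrder g

namespace Monoid.CoprodI

variable {ι : Type*} [DecidableEq ι] {G : ι → Type*} [∀ i, Group (G i)]
  [∀ i, DecidableEq (G i)]

set_option linter.unusedSectionVars false

theorem word_equiv_symm (w : Word G) : Word.equiv.symm w = w.prod := rfl

theorem word_eq_equiv_of_prod {w : Word G} {g : CoprodI G} (h : w.prod = g) :
    Word.equiv g = w := by
  rw [← h, ← word_equiv_symm, Equiv.apply_symm_apply]

theorem prod_eq_self (g : CoprodI G) : (Word.equiv g).prod = g := by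
  rw [← word_equiv_symm, Equiv.symm_apply_apply]

theorem word_prod_ne_one {w : Word G} (h : w.toList ≠ []) : w.prod ≠ 1 := by
  intro hp
  have h1 : Word.equiv (1 : CoprodI G) = w := word_eq_equiv_of_prod hp
  have h2 : Word.equiv (1 : CoprodI G) = Word.empty := word_eq_equiv_of_prod Word.prod_empty
  rw [h2] at h1
  exact h (by rw [← h1]; rfl)

theorem prod_mk_append (l₁ l₂ : List (Σ i, G i)) (h1 h2 h3 h4 h5 h6) :
    (Word.prod (⟨l₁ ++ l₂, h1, h2⟩ : Word G)) =
      Word.prod (⟨l₁, h3, h4⟩ : Word G) * Word.prod (⟨l₂, h5, h6⟩ : Word G) := by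
  simp [Word.prod, List.map_append]

/-- A word whose first and last letters are in different factors has infinite-order product. -/
theorem not_isOfFinOrder_of_firstNeLast (w : Word G) (hd lst : Σ i, G i)
    (hh : w.toList.head? = some hd) (hl : w.toList.getLast? = some lst)
    (hne : hd.fst ≠ lst.fst) : ¬ IsOfFinOrder w.prod := by
  have hwnil : w.toList ≠ [] := fun h => by simp [h] at hh
  have key : ∀ k : ℕ, ∃ w' : Word G, w'.prod = w.prod ^ (k + 1) ∧
      w'.toList.head? = some hd ∧ w'.toList.getLast? = some lst := by
    intro k
    induction k with
    | zero => exact ⟨w, by rw [pow_one], hh, hl⟩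
    | succ k ih =>
      obtain ⟨w', hp, hh', hl'⟩ := ih
      have hw'nil : w'.toList ≠ [] := fun h => by simp [h] at hh'
      have hbound : ∀ x ∈ w.toList.getLast?, ∀ y ∈ w'.toList.head?,
          (fun l l' : Σ i, G i => l.fst ≠ l'.fst) x y := by
        intro x hx y hy
        rw [hl, Option.mem_some_iff] at hx
        rw [hh', Option.mem_some_iff] at hy
        subst hx; subst hy
        exact fun h => hne h.symm
      refine ⟨⟨w.toList ++ w'.toList, ?_, w.chain_ne.append w'.chain_ne hbound⟩, ?_, ?_, ?_⟩
      · intro l hl''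
        rcases List.mem_append.mp hl'' with h | h
        · exact w.ne_one l h
        · exact w'.ne_one l h
      · rw [prod_mk_append _ _ _ _ w.ne_one w.chain_ne w'.ne_one w'.chain_ne]
        show w.prod * w'.prod = _
        rw [hp, ← pow_succ']
      · show (w.toList ++ w'.toList).head? = some hd
        rw [List.head?_append_of_ne_nil _ hwnil]  -- guess name
        exact hh
      · show (w.toList ++ w'.toList).getLast? = some lst
        rw [List.getLast?_append_of_ne_nil _ hw'nil]
        exact hl'
  intro hfin
  obtain ⟨n, hnpos, hgn⟩ := isOfFinOrder_iff_pow_eq_one.mp hfin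
  obtain ⟨k, rfl⟩ : ∃ k, n = k + 1 := ⟨n - 1, (Nat.succ_pred_eq_of_pos hnpos).symm⟩
  obtain ⟨w', hp, hh', _⟩ := key k
  exact word_prod_ne_one (fun h => by simp [h] at hh') (hp.trans hgn)

end Monoid.CoprodI

namespace Monoid.CoprodI

variable {ι : Type*} [DecidableEq ι] {G : ι → Type*} [∀ i, Group (G i)]
  [∀ i, DecidableEq (G i)]

set_option linter.unusedSectionVars false

/-- Product of a list of letters. -/
def wprod (l : List (Σ i, G i)) : CoprodI G := (l.map fun x => of x.snd).prod

theorem wprod_nil : wprod ([] : List (Σ i, G i)) = 1 := rfl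

theorem wprod_cons (x : Σ i, G i) (l : List (Σ i, G i)) :
    wprod (x :: l) = of x.snd * wprod l := by simp [wprod]

theorem wprod_append (l₁ l₂ : List (Σ i, G i)) :
    wprod (l₁ ++ l₂) = wprod l₁ * wprod l₂ := by simp [wprod]

theorem wprod_singleton (x : Σ i, G i) : wprod [x] = of x.snd := by simp [wprod]

theorem word_prod_eq_wprod (w : Word G) : w.prod = wprod w.toList := rfl

theorem exists_conj_of_isOfFinOrder [Nonempty ι] {g : CoprodI G} (hg : IsOfFinOrder g) :
    ∃ (x : CoprodI G) (i : ι) (m : G i), x * g * x⁻¹ = of m := by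
  suffices H : ∀ (n : ℕ) (g : CoprodI G), (Word.equiv g).toList.length ≤ n → IsOfFinOrder g →
      ∃ (x : CoprodI G) (i : ι) (m : G i), x * g * x⁻¹ = of m from
    H _ g le_rfl hg
  intro n
  induction n with
  | zero =>
    intro g hlen _
    have hnil : (Word.equiv g).toList = [] := List.length_eq_zero_iff.mp (Nat.le_zero.mp hlen)
    have : g = 1 := by
      rw [← prod_eq_self g, word_prod_eq_wprod, hnil, wprod_nil]
    refine ⟨1, Classical.arbitrary ι, 1, by simp [this]⟩
  | succ n ih =>
    intro g hlen hfin
    have hprod : (Word.equiv g).prod = g := prod_eq_self g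
    rcases hlist : (Word.equiv g).toList with _ | ⟨hd, tl⟩
    · -- empty word
      have : g = 1 := by rw [← hprod, word_prod_eq_wprod, hlist, wprod_nil]
      exact ⟨1, Classical.arbitrary ι, 1, by simp [this]⟩
    · obtain ⟨i, a⟩ := hd
      have hg_eq : g = of a * wprod tl := by
        rw [← hprod, word_prod_eq_wprod, hlist, wprod_cons]
      rcases eq_or_ne tl [] with rfl | htl
      · -- single letter
        refine ⟨1, i, a, by simp [hg_eq, wprod_nil]⟩
      -- tl nonempty; b is the last letter
      set b := tl.getLast htl with hb_def
      have hlast : (Word.equiv g).toList.getLast? = some b := by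
        rw [hlist, List.getLast?_eq_getLast (List.cons_ne_nil _ _),
          List.getLast_cons htl]
      have htl_eq : tl = tl.dropLast ++ [b] := (List.dropLast_append_getLast htl).symm
      have hchain_tl : tl.Chain' (fun l l' : Σ i, G i => l.fst ≠ l'.fst) := by
        have := (Word.equiv g).chain_ne
        rw [hlist] at this
        exact this.tail
      have hne_one_tl : ∀ l ∈ tl, Sigma.snd l ≠ 1 := by
        intro l hl
        exact (Word.equiv g).ne_one l (by rw [hlist]; exact List.mem_cons_of_mem _ hl)
      by_cases hfst : (⟨i, a⟩ : Σ i, G i).fst = b.fst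
      case neg =>
        -- head and last in different factors: infinite order, contradiction
        exact absurd hfin <| by
          rw [← hprod]
          exact not_isOfFinOrder_of_firstNeLast _ ⟨i, a⟩ b (by rw [hlist]; rfl) hlast hfst
      case pos =>
        -- cyclically reduce
        obtain ⟨j, bb⟩ := b
        simp only at hfst
        subst hfst
        set g₁ : CoprodI G := (of a)⁻¹ * g * ((of a)⁻¹)⁻¹ with hg₁
        have hfin₁ : IsOfFinOrder g₁ := by
          obtain ⟨m, hmpos, hm⟩ := isOfFinOrder_iff_pow_eq_one.mp hfin
          exact isOfFinOrder_iff_pow_eq_one.mpr ⟨m, hmpos, by rw [hg₁, conj_pow, hm, mul_one,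
            mul_inv_cancel]⟩
        have hsplit : wprod tl = wprod tl.dropLast * of bb := by
          conv_lhs => rw [htl_eq]
          rw [wprod_append, wprod_singleton]
        have hg₁_eq : g₁ = wprod tl.dropLast * (of bb * of a) := by
          rw [hg₁, hg_eq, inv_inv, hsplit]
          group
        have hd_ne_one : ∀ l ∈ tl.dropLast, Sigma.snd l ≠ 1 := fun l hl =>
          hne_one_tl l ((List.dropLast_sublist tl).subset hl)
        have hd_chain : tl.dropLast.Chain' (fun l l' : Σ i, G i => l.fst ≠ l'.fst) :=
          hchain_tl.prefix (List.dropLast_prefix tl)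
        have hd_len : tl.dropLast.length = tl.length - 1 := List.length_dropLast
        have htl_len : tl.length ≤ n := by
          have := hlen
          rw [hlist] at this
          simpa using this
        have hboundary : ∀ x ∈ tl.dropLast.getLast?, x.fst ≠ i := by
          intro x hx
          have := hchain_tl
          rw [htl_eq] at this
          exact (List.isChain_append.mp this).2.2 x hx ⟨i, bb⟩ (by simp)
        -- two cases: bb * a = 1 or not
        rcases eq_or_ne (bb * a) 1 with hone | hone
        · -- cancellation: new word is tl.dropLast
          have hg₁_eq' : g₁ = wprod tl.dropLast := by
            rw [hg₁_eq, ← MonoidHom.map_mul, hone, map_one, mul_one]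
          set w₁ : Word G := ⟨tl.dropLast, hd_ne_one, hd_chain⟩ with hw₁
          have hequiv₁ : Word.equiv g₁ = w₁ :=
            word_eq_equiv_of_prod (by rw [word_prod_eq_wprod, hw₁, ← hg₁_eq'])
          have hlen₁ : (Word.equiv g₁).toList.length ≤ n := by
            rw [hequiv₁]
            show tl.dropLast.length ≤ n
            omega
          obtain ⟨y, i', m, hy⟩ := ih g₁ hlen₁ hfin₁
          refine ⟨y * (of a)⁻¹, i', m, ?_⟩
          rw [← hy, hg₁]
          group
        · -- replacement: new word is tl.dropLast ++ [⟨i, bb * a⟩]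
          have hg₁_eq' : g₁ = wprod (tl.dropLast ++ [⟨i, bb * a⟩]) := by
            rw [hg₁_eq, wprod_append, wprod_singleton, ← MonoidHom.map_mul]
          have hne_one₁ : ∀ l ∈ tl.dropLast ++ [(⟨i, bb * a⟩ : Σ i, G i)],
              Sigma.snd l ≠ 1 := by
            intro l hl
            rcases List.mem_append.mp hl with h | h
            · exact hd_ne_one l h
            · rw [List.mem_singleton] at h
              subst h
              exact hone
          have hchain₁ : (tl.dropLast ++ [(⟨i, bb * a⟩ : Σ i, G i)]).Chain'
              (fun l l' : Σ i, G i => l.fst ≠ l'.fst) := by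
            refine List.isChain_append.mpr ⟨hd_chain, List.isChain_singleton _, ?_⟩
            intro x hx y hy
            rw [List.head?_cons, Option.mem_some_iff] at hy
            subst hy
            exact hboundary x hx
          set w₁ : Word G := ⟨tl.dropLast ++ [(⟨i, bb * a⟩ : Σ i, G i)], hne_one₁, hchain₁⟩ with hw₁
          have hequiv₁ : Word.equiv g₁ = w₁ :=
            word_eq_equiv_of_prod (by rw [word_prod_eq_wprod, hw₁, ← hg₁_eq'])
          have hlen₁ : (Word.equiv g₁).toList.length ≤ n := by
            rw [hequiv₁]
            show (tl.dropLast ++ [(⟨i, bb * a⟩ : Σ i, G i)]).length ≤ n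
            rw [List.length_append, List.length_singleton, hd_len]
            have : tl.length ≠ 0 := fun h => htl (List.length_eq_zero_iff.mp h)
            omega
          obtain ⟨y, i', m, hy⟩ := ih g₁ hlen₁ hfin₁
          refine ⟨y * (of a)⁻¹, i', m, ?_⟩
          rw [← hy, hg₁]
          group

end Monoid.CoprodI

open Monoid
open scoped Monoid.Coprod

section Transport

variable (M N : Type) [Group M] [Group N] [DecidableEq M] [DecidableEq N]

/-- The family for the binary coproduct. -/
abbrev coprodFam : Bool → Type := fun b => cond b M N

instance coprodFamGroup : ∀ b, Group (coprodFam M N b) := fun b => by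
  cases b
  · exact inferInstanceAs (Group N)
  · exact inferInstanceAs (Group M)

instance coprodFamDecEq : ∀ b, DecidableEq (coprodFam M N b) := fun b => by
  cases b
  · exact inferInstanceAs (DecidableEq N)
  · exact inferInstanceAs (DecidableEq M)

/-- From the binary coproduct to the indexed coproduct. -/
def toCoprodI : M ∗ N →* CoprodI (coprodFam M N) :=
  Coprod.lift (CoprodI.of : coprodFam M N true →* _)
    (CoprodI.of : coprodFam M N false →* _)

/-- The components of the inverse map. -/
def famHom : ∀ b, coprodFam M N b →* M ∗ N
  | true => Coprod.inl
  | false => Coprod.inr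

/-- From the indexed coproduct to the binary coproduct. -/
def ofCoprodI : CoprodI (coprodFam M N) →* M ∗ N :=
  CoprodI.lift (famHom M N)

theorem ofCoprodI_toCoprodI (g : M ∗ N) : ofCoprodI M N (toCoprodI M N g) = g := by
  have : (ofCoprodI M N).comp (toCoprodI M N) = MonoidHom.id _ := by
    apply Coprod.hom_ext
    · ext x
      show ofCoprodI M N (toCoprodI M N (Coprod.inl x)) = Coprod.inl x
      rw [toCoprodI, Coprod.lift_apply_inl, ofCoprodI]
      exact CoprodI.lift_of (famHom M N) (i := true) x
    · ext x
      show ofCoprodI M N (toCoprodI M N (Coprod.inr x)) = Coprod.inr x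
      rw [toCoprodI, Coprod.lift_apply_inr, ofCoprodI]
      exact CoprodI.lift_of (famHom M N) (i := false) x
  exact DFunLike.congr_fun this g

theorem Coprod.exists_conj_of_isOfFinOrder {g : M ∗ N} (hg : IsOfFinOrder g) :
    ∃ x : M ∗ N, (∃ m : M, x * g * x⁻¹ = Coprod.inl m) ∨
      (∃ m : N, x * g * x⁻¹ = Coprod.inr m) := by
  obtain ⟨y, i, m, hy⟩ :=
    CoprodI.exists_conj_of_isOfFinOrder (g := toCoprodI M N g)
      ((toCoprodI M N).isOfFinOrder hg)
  have := congrArg (ofCoprodI M N) hy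
  simp only [map_mul, map_inv, ofCoprodI_toCoprodI] at this
  refine ⟨ofCoprodI M N y, ?_⟩
  cases i
  · exact Or.inr ⟨m, by rw [this, ofCoprodI]; exact CoprodI.lift_of (famHom M N) (i := false) m⟩
  · exact Or.inl ⟨m, by rw [this, ofCoprodI]; exact CoprodI.lift_of (famHom M N) (i := true) m⟩

end Transport

section Construction

open Multiplicative

/-- Monoid hom from `Multiplicative (ZMod n)` determined by an element whose `n`-th power is 1. -/
def zmodPowHom {X : Type*} [Monoid X] (n : ℕ) [NeZero n] (x : X) (hx : x ^ n = 1) :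
    Multiplicative (ZMod n) →* X where
  toFun a := x ^ (Multiplicative.toAdd a).val
  map_one' := by
    show x ^ (ZMod.val (0 : ZMod n)) = 1
    rw [ZMod.val_zero, pow_zero]
  map_mul' a b := by
    show x ^ (ZMod.val (Multiplicative.toAdd a + Multiplicative.toAdd b)) = _
    rw [ZMod.val_add, ← pow_eq_pow_mod _ hx, pow_add]

theorem zmodPowHom_apply {X : Type*} [Monoid X] (n : ℕ) [NeZero n] (x : X) (hx : x ^ n = 1)
    (a : ZMod n) : zmodPowHom n x hx (Multiplicative.ofAdd a) = x ^ a.val := rfl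

/-- `AddAut A` as `MulAut` of the multiplicative type. -/
def addAutToMulAut {A : Type*} [AddZeroClass A] : Multiplicative (AddAut A) →* MulAut (Multiplicative A) where
  toFun e := AddEquiv.toMultiplicative e.toAdd
  map_one' := rfl
  map_mul' _ _ := rfl

variable {p : ℕ} [NeZero p]

/-- Multiplication by a unit as an automorphism of `Multiplicative (ZMod p)`. -/
def mulAutZMod : (ZMod p)ˣ →* MulAut (Multiplicative (ZMod p)) :=
  addAutToMulAut.comp (DistribMulAction.toAddAut (ZMod p)ˣ (ZMod p))

theorem mulAutZMod_apply (v : (ZMod p)ˣ) (x : ZMod p) :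
    mulAutZMod v (Multiplicative.ofAdd x) = Multiplicative.ofAdd ((v : ZMod p) * x) := rfl

/-- The action of `ZMod 6` on `ZMod p` through a unit of order dividing 6. -/
def psiAct (u : (ZMod p)ˣ) (hu : u ^ 6 = 1) :
    Multiplicative (ZMod 6) →* MulAut (Multiplicative (ZMod p)) :=
  zmodPowHom 6 (mulAutZMod u) (by rw [← map_pow, hu, map_one])

theorem psiAct_apply (u : (ZMod p)ˣ) (hu : u ^ 6 = 1) (k : ZMod 6) (x : ZMod p) :
    psiAct u hu (Multiplicative.ofAdd k) (Multiplicative.ofAdd x)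
      = Multiplicative.ofAdd ((u : ZMod p) ^ k.val * x) := by
  show ((mulAutZMod u) ^ k.val) (Multiplicative.ofAdd x) = _
  rw [← map_pow, mulAutZMod_apply, Units.val_pow_eq_pow_val]

end Construction

open Multiplicative

theorem stmt_7 (p : ℕ) (hp : p.Prime) (hp6 : p % 6 = 1) :
    ∃ (G : Type) (_ : Group G) (_ : Fintype G),
      Fintype.card G = 6 * p ∧
      ∃ φ : Coprod (Multiplicative (ZMod 2)) (Multiplicative (ZMod 3)) →* G,
        Function.Surjective φ ∧ Monoid.IsTorsionFree φ.ker := by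
  haveI : Fact p.Prime := ⟨hp⟩
  haveI : NeZero p := ⟨hp.ne_zero⟩
  haveI : Fact (Nat.Prime 2) := ⟨Nat.prime_two⟩
  haveI : Fact (Nat.Prime 3) := ⟨Nat.prime_three⟩
  have hp2 : 2 ≤ p := hp.two_le
  -- find a unit of order 6
  obtain ⟨z, hz⟩ := IsCyclic.exists_ofOrder_eq_natCard (α := (ZMod p)ˣ)
  have hzcard : orderOf z = p - 1 := by
    rw [hz, Nat.card_eq_fintype_card, ZMod.card_units]
  have h6dvd : 6 ∣ orderOf z := by rw [hzcard]; omega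
  have hzne : orderOf z ≠ 0 := by rw [hzcard]; omega
  set u : (ZMod p)ˣ := z ^ (orderOf z / 6) with hu_def
  have hu : orderOf u = 6 := orderOf_pow_orderOf_div hzne h6dvd
  have hu6 : u ^ 6 = 1 := by rw [← hu]; exact pow_orderOf_eq_one u
  -- basic facts about u
  have hu2 : u ^ 2 ≠ 1 := fun h => by
    have := orderOf_dvd_of_pow_eq_one h
    rw [hu] at this
    omega
  have hu3 : (u : ZMod p) ^ 3 = -1 := by
    have hx2 : ((u ^ 3 : (ZMod p)ˣ) : ZMod p) * ((u ^ 3 : (ZMod p)ˣ) : ZMod p) = 1 := by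
      rw [← Units.val_mul, ← pow_add]
      norm_num [hu6]
    rcases mul_self_eq_one_iff.mp hx2 with h | h
    · exfalso
      have : u ^ 3 = 1 := Units.ext (by rw [h]; rfl)
      have := orderOf_dvd_of_pow_eq_one this
      rw [hu] at this
      omega
    · rw [← Units.val_pow_eq_pow_val, h]
  -- the group G
  letI K := Multiplicative (ZMod 6)
  letI Np := Multiplicative (ZMod p)
  letI ψ := psiAct u hu6
  letI G := SemidirectProduct Np K ψ
  letI : Group G := inferInstanceAs (Group (SemidirectProduct Np K ψ))
  letI e : G ≃ Np × K :=
    ⟨fun x => (x.left, x.right), fun q => ⟨q.1, q.2⟩, fun _ => rfl, fun _ => rfl⟩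
  letI : Fintype G := Fintype.ofEquiv _ e.symm
  have hcardG : Fintype.card G = 6 * p := by
    rw [Fintype.card_congr e]
    simp only [Fintype.card_prod]
    have h1 : Fintype.card Np = p := by
      rw [Fintype.card_multiplicative, ZMod.card]
    have h2 : Fintype.card K = 6 := by
      rw [Fintype.card_multiplicative, ZMod.card]
    rw [h1, h2, mul_comm]
  -- the elements a, b, c
  set a : G := ⟨ofAdd 1, ofAdd 3⟩ with ha_def
  set b : G := SemidirectProduct.inr (ofAdd 2) with hb_def
  have ha2 : a * a = 1 := by
    ext
    · show (a * a).left = (1 : G).left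
      rw [SemidirectProduct.mul_left]
      show ofAdd 1 * ψ (ofAdd 3) (ofAdd 1) = 1
      rw [psiAct_apply]
      have : ZMod.val (3 : ZMod 6) = 3 := by decide
      rw [this, hu3, mul_one, ← ofAdd_add]
      norm_num
    · show (a * a).right = (1 : G).right
      rw [SemidirectProduct.mul_right]
      show ofAdd (3 : ZMod 6) * ofAdd 3 = 1
      rw [← ofAdd_add]
      decide
  have ha_ne : a ≠ 1 := by
    intro h
    have : a.right = (1 : G).right := by rw [h]
    revert this
    show ofAdd (3 : ZMod 6) = 1 → False
    decide
  have haord : orderOf a = 2 := orderOf_eq_prime (by rw [pow_two]; exact ha2) ha_ne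
  have hb3 : b ^ 3 = 1 := by
    rw [hb_def, ← map_pow]
    have : (ofAdd (2 : ZMod 6)) ^ 3 = 1 := by decide
    rw [this, map_one]
  have hb_ne : b ≠ 1 := by
    intro h
    have : b.right = (1 : G).right := by rw [h]
    revert this
    show ofAdd (2 : ZMod 6) = 1 → False
    decide
  have hbord : orderOf b = 3 := orderOf_eq_prime hb3 hb_ne
  -- the commutator-like element c of order p
  set d : ZMod p := 1 + (u : ZMod p) ^ 5 with hd_def
  have hd_ne : d ≠ 0 := by
    intro h
    have h5 : (u : ZMod p) ^ 5 = -1 := by linear_combination h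
    have h53 : (u : ZMod p) ^ 5 = (u : ZMod p) ^ 3 := by rw [h5, hu3]
    have hvne : (u : ZMod p) ≠ 0 := Units.ne_zero u
    have : (u : ZMod p) ^ 3 * (u : ZMod p) ^ 2 = (u : ZMod p) ^ 3 * 1 := by
      rw [mul_one, ← pow_add]
      exact h53
    have h2 : (u : ZMod p) ^ 2 = 1 := mul_left_cancel₀ (pow_ne_zero _ hvne) this
    exact hu2 (Units.ext (by rw [Units.val_pow_eq_pow_val, h2]; rfl))
  have hab : a * b = ⟨ofAdd 1, ofAdd 5⟩ := by
    ext
    · show (a * b).left = ofAdd (1 : ZMod p)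
      rw [SemidirectProduct.mul_left]
      show ofAdd 1 * ψ (ofAdd 3) (1 : Np) = ofAdd 1
      rw [map_one (ψ (ofAdd 3)), mul_one]
    · show (a * b).right = ofAdd (5 : ZMod 6)
      rw [SemidirectProduct.mul_right]
      show ofAdd (3 : ZMod 6) * ofAdd 2 = ofAdd 5
      decide
  have haba : a * b * a = ⟨ofAdd d, ofAdd 2⟩ := by
    rw [hab]
    apply SemidirectProduct.ext
    · show (_ : G).left = ofAdd d
      rw [SemidirectProduct.mul_left]
      show ofAdd 1 * ψ (ofAdd 5) (ofAdd 1) = ofAdd d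
      rw [psiAct_apply]
      have : ZMod.val (5 : ZMod 6) = 5 := by decide
      rw [this, mul_one, ← ofAdd_add]
    · show (_ : G).right = ofAdd (2 : ZMod 6)
      rw [SemidirectProduct.mul_right]
      show ofAdd (5 : ZMod 6) * ofAdd 3 = ofAdd 2
      decide
  have hc : a * b * a * b⁻¹ = SemidirectProduct.inl (ofAdd d) := by
    rw [haba, hb_def, ← map_inv]
    apply SemidirectProduct.ext
    · show (_ : G).left = ofAdd d
      rw [SemidirectProduct.mul_left]
      show ofAdd d * ψ (ofAdd 2) (1 : Np) = ofAdd d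
      rw [map_one (ψ (ofAdd 2)), mul_one]
    · show (_ : G).right = (1 : Np ⋊[ψ] K).right
      rw [SemidirectProduct.mul_right]
      show ofAdd (2 : ZMod 6) * (ofAdd (2 : ZMod 6))⁻¹ = _
      rw [mul_inv_cancel]
      rfl
  have hcp : (a * b * a * b⁻¹) ^ p = 1 := by
    rw [hc, ← map_pow, ← ofAdd_nsmul]
    have : p • d = 0 := by
      rw [nsmul_eq_mul, ZMod.natCast_self, zero_mul]
    rw [this]
    rfl
  have hc_ne : a * b * a * b⁻¹ ≠ 1 := by
    rw [hc]
    intro h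
    have := SemidirectProduct.inl_injective (φ := ψ) (h.trans (map_one _).symm)
    exact hd_ne (ofAdd_eq_one.mp this)
  have hcord : orderOf (a * b * a * b⁻¹) = p := orderOf_eq_prime hcp hc_ne
  -- the homomorphism φ
  letI fa := zmodPowHom 2 a (by rw [pow_two]; exact ha2)
  letI fb := zmodPowHom 3 b hb3
  letI φ : Coprod (Multiplicative (ZMod 2)) (Multiplicative (ZMod 3)) →* G :=
    Coprod.lift fa fb
  have hφa : φ (Coprod.inl (ofAdd (1 : ZMod 2))) = a := by
    rw [Coprod.lift_apply_inl]
    show a ^ (ZMod.val (1 : ZMod 2)) = a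
    have : ZMod.val (1 : ZMod 2) = 1 := rfl
    rw [this, pow_one]
  have hφb : φ (Coprod.inr (ofAdd (1 : ZMod 3))) = b := by
    rw [Coprod.lift_apply_inr]
    show b ^ (ZMod.val (1 : ZMod 3)) = b
    have : ZMod.val (1 : ZMod 3) = 1 := rfl
    rw [this, pow_one]
  -- injectivity on factors
  have hfa_inj : ∀ m : Multiplicative (ZMod 2), fa m = 1 → m = 1 := by
    intro m hm
    have hdvd : orderOf a ∣ (Multiplicative.toAdd m).val :=
      orderOf_dvd_of_pow_eq_one hm
    rw [haord] at hdvd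
    have hlt : (Multiplicative.toAdd m).val < 2 := ZMod.val_lt _
    have : (Multiplicative.toAdd m).val = 0 := by omega
    have : Multiplicative.toAdd m = 0 := (ZMod.val_eq_zero _).mp this
    exact toAdd_eq_zero.mp this
  have hfb_inj : ∀ m : Multiplicative (ZMod 3), fb m = 1 → m = 1 := by
    intro m hm
    have hdvd : orderOf b ∣ (Multiplicative.toAdd m).val :=
      orderOf_dvd_of_pow_eq_one hm
    rw [hbord] at hdvd
    have hlt : (Multiplicative.toAdd m).val < 3 := ZMod.val_lt _
    have : (Multiplicative.toAdd m).val = 0 := by omega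
    have : Multiplicative.toAdd m = 0 := (ZMod.val_eq_zero _).mp this
    exact toAdd_eq_zero.mp this
  -- surjectivity
  have ha_mem : a ∈ φ.range := ⟨Coprod.inl (ofAdd (1 : ZMod 2)), hφa⟩
  have hb_mem : b ∈ φ.range := ⟨Coprod.inr (ofAdd (1 : ZMod 3)), hφb⟩
  have hc_mem : a * b * a * b⁻¹ ∈ φ.range := by
    exact mul_mem (mul_mem (mul_mem ha_mem hb_mem) ha_mem) (inv_mem hb_mem)
  have h2dvd : 2 ∣ Nat.card φ.range := by
    have := Subgroup.orderOf_dvd_natCard φ.range ha_mem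
    rwa [haord] at this
  have h3dvd : 3 ∣ Nat.card φ.range := by
    have := Subgroup.orderOf_dvd_natCard φ.range hb_mem
    rwa [hbord] at this
  have hpdvd : p ∣ Nat.card φ.range := by
    have := Subgroup.orderOf_dvd_natCard φ.range hc_mem
    rwa [hcord] at this
  have h6dvd' : 6 ∣ Nat.card φ.range := by
    have := (Nat.coprime_iff_gcd_eq_one.mpr (by norm_num)).mul_dvd_of_dvd_of_dvd h2dvd h3dvd
    simpa using this
  have hcop : Nat.Coprime 6 p := by
    have hne2 : p ≠ 2 := fun h => by omega
    have hne3 : p ≠ 3 := fun h => by omega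
    have : ¬ (p ∣ 6) := by
      intro h
      have := Nat.le_of_dvd (by norm_num) h
      omega
    exact Nat.Coprime.symm ((Nat.Prime.coprime_iff_not_dvd hp).mpr this)
  have h6pdvd : 6 * p ∣ Nat.card φ.range := hcop.mul_dvd_of_dvd_of_dvd h6dvd' hpdvd
  have hrange_card : Nat.card φ.range = Nat.card G := by
    have hdvd' : Nat.card φ.range ∣ Nat.card G := Subgroup.card_subgroup_dvd_card _
    have hG : Nat.card G = 6 * p := by rw [Nat.card_eq_fintype_card, hcardG]
    have h1 : Nat.card φ.range = 6 * p :=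
      Nat.dvd_antisymm (by rw [← hG]; exact hdvd') h6pdvd
    exact h1.trans hG.symm
  have hrange_top : φ.range = ⊤ := Subgroup.eq_top_of_card_eq _ hrange_card
  have hsurj : Function.Surjective φ := MonoidHom.range_eq_top.mp hrange_top
  -- torsion-free kernel
  refine ⟨G, inferInstance, inferInstance, hcardG, φ, hsurj, ?_⟩
  intro y hy hyfin
  apply hy
  have hgfin : IsOfFinOrder (y : Coprod (Multiplicative (ZMod 2)) (Multiplicative (ZMod 3))) :=
    (φ.ker.subtype).isOfFinOrder hyfin
  obtain ⟨x, hx⟩ := Coprod.exists_conj_of_isOfFinOrder _ _ hgfin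
  have hyker : φ (y : Coprod (Multiplicative (ZMod 2)) (Multiplicative (ZMod 3))) = 1 := y.2
  rcases hx with ⟨m, hm⟩ | ⟨m, hm⟩
  · have h1 : φ (x * ↑y * x⁻¹) = fa m := by rw [hm, Coprod.lift_apply_inl]
    rw [map_mul, map_mul, hyker, mul_one, map_inv, mul_inv_cancel] at h1
    have hm1 : m = 1 := hfa_inj m h1.symm
    rw [hm1, map_one] at hm
    have : (y : Coprod (Multiplicative (ZMod 2)) (Multiplicative (ZMod 3))) = 1 := by
      have := hm
      group at this ⊢
      exact (conj_eq_one_iff (a := x) (b := (y : _))).mp (by rw [← this]; group)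
    exact Subtype.ext this
  · have h1 : φ (x * ↑y * x⁻¹) = fb m := by rw [hm, Coprod.lift_apply_inr]
    rw [map_mul, map_mul, hyker, mul_one, map_inv, mul_inv_cancel] at h1
    have hm1 : m = 1 := hfb_inj m h1.symm
    rw [hm1, map_one] at hm
    have : (y : Coprod (Multiplicative (ZMod 2)) (Multiplicative (ZMod 3))) = 1 := by
      have := hm
      group at this ⊢
      exact (conj_eq_one_iff (a := x) (b := (y : _))).mp (by rw [← this]; group)
    exact Subtype.ext this
end

section
/- The set of integers g > 1 for which there exist a finite group G of order 6(g-1) and a surjective group homomorphism from the free product ℤ/2 ∗ ℤ/3 onto G with torsion-free kernel is infinite. -/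
open Monoid

namespace FPTorsion

variable {ι : Type} {G : ι → Type} [∀ i, Group (G i)]

open Monoid.CoprodI

def prodL (l : List (Σ i, G i)) : CoprodI G :=
  (l.map fun u => CoprodI.of u.2).prod

theorem word_prod_eq_one_iff [DecidableEq ι] [∀ i, DecidableEq (G i)]
    (w : Word G) (h : w.prod = 1) : w = Word.empty := by
  have : Word.equiv.symm w = Word.equiv.symm Word.empty := by
    show w.prod = Word.empty.prod
    simp [h]
  exact Word.equiv.symm.injective this

theorem neword_prod_pow_ne_one [DecidableEq ι] [∀ i, DecidableEq (G i)]
    {i j : ι} (hij : i ≠ j) (w : NeWord G i j) {n : ℕ} (hn : n ≠ 0) :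
    w.prod ^ n ≠ 1 := by
  have key : ∀ m : ℕ, ∃ v : NeWord G i j, v.prod = w.prod ^ (m + 1) := by
    intro m
    induction m with
    | zero => exact ⟨w, by rw [pow_one]⟩
    | succ k ih =>
      obtain ⟨v, hv⟩ := ih
      refine ⟨NeWord.append v hij.symm w, ?_⟩
      rw [NeWord.append_prod, hv, ← pow_succ]
  obtain ⟨m, rfl⟩ := Nat.exists_eq_succ_of_ne_zero hn
  obtain ⟨v, hv⟩ := key m
  rw [← hv]
  intro hone
  have hempty : v.toWord = Word.empty := word_prod_eq_one_iff _ hone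
  have := v.toList_ne_nil
  rw [show v.toList = v.toWord.toList from rfl, hempty] at this
  exact this rfl

theorem conj_of_isOfFinOrder [Nonempty ι] {x : CoprodI G} (hx : IsOfFinOrder x) :
    ∃ (c : CoprodI G) (i : ι) (g : G i), x = c * CoprodI.of g * c⁻¹ := by
  classical
  suffices H : ∀ (n : ℕ) (l : List (Σ i, G i)), l.length ≤ n →
      (∀ u ∈ l, u.2 ≠ 1) → l.Chain' (fun a b => a.1 ≠ b.1) →
      IsOfFinOrder (prodL (G := G) l) →
      ∃ (c : CoprodI G) (i : ι) (g : G i), prodL (G := G) l = c * CoprodI.of g * c⁻¹ by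
    have hx' : prodL (G := G) (Word.equiv x).toList = x := by
      have h1 : (Word.equiv x).prod = x := Word.equiv.symm_apply_apply x
      simpa [prodL, Word.prod] using h1
    rw [← hx'] at hx ⊢
    exact H _ _ le_rfl (Word.equiv x).ne_one (Word.equiv x).chain_ne hx
  intro n
  induction n with
  | zero =>
    intro l hl _ _ _
    rw [List.length_eq_zero_iff.mp (Nat.le_zero.mp hl)]
    exact ⟨1, Classical.arbitrary ι, 1, by simp [prodL]⟩
  | succ N ih =>
    intro l hlen hne hchain hfin
    match l with
    | [] => exact ⟨1, Classical.arbitrary ι, 1, by simp [prodL]⟩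
    | a :: t =>
      by_cases ht : t = []
      · subst ht
        exact ⟨1, a.1, a.2, by simp [prodL]⟩
      by_cases hib : a.1 = (t.getLast ht).1
      · -- not cyclically reduced: conjugate down
        have hsplit : t = t.dropLast ++ [t.getLast ht] := (List.dropLast_append_getLast ht).symm
        obtain ⟨i, av⟩ := a
        set b := t.getLast ht with hb
        obtain ⟨j, bv⟩ := b
        simp only at hib
        subst hib
        set t' := t.dropLast with ht'
        have hl : prodL (G := G) (⟨i,av⟩ :: t) =
            CoprodI.of av * prodL (G := G) t' * CoprodI.of bv := by
          rw [show t = t' ++ [(⟨i, bv⟩ : Σ i, G i)] from hsplit]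
          simp [prodL, mul_assoc]
        have hchain' : (t' ++ [(⟨i, bv⟩ : Σ i, G i)]).Chain' (fun a b => a.1 ≠ b.1) := by
          have h2 := hchain.tail
          rwa [show (⟨i,av⟩ :: t : List (Σ i, G i)).tail = t' ++ [⟨i,bv⟩] from by
            simp [← hsplit]] at h2
        have hne' : ∀ u ∈ t', u.2 ≠ 1 := by
          intro u hu
          exact hne u (List.mem_cons_of_mem _ (hsplit ▸ List.mem_append_left _ hu))
        have hchaint' : t'.Chain' (fun a b => a.1 ≠ b.1) := (List.isChain_append.mp hchain').1
        set y : CoprodI G := prodL (G := G) t' * CoprodI.of (bv * av) with hy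
        have hyconj : prodL (G := G) (⟨i,av⟩ :: t) = CoprodI.of av * y * (CoprodI.of av)⁻¹ := by
          rw [hl, hy, map_mul]
          group
        have hyfin : IsOfFinOrder y := by
          rw [isOfFinOrder_iff_pow_eq_one] at hfin ⊢
          obtain ⟨m, hm, hfm⟩ := hfin
          refine ⟨m, hm, ?_⟩
          have h2 : CoprodI.of av * y ^ m * (CoprodI.of av)⁻¹ = 1 := by
            rw [← conj_pow, ← hyconj]; exact hfm
          have h3 : y ^ m =
              (CoprodI.of av)⁻¹ * (CoprodI.of av * y ^ m * (CoprodI.of av)⁻¹) * CoprodI.of av := by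
            group
          rw [h3, h2]
          group
        have hlent : t.length ≤ N := by
          have : t.length + 1 ≤ N + 1 := by simpa using hlen
          omega
        by_cases hba : bv * av = 1
        · have hy2 : y = prodL (G := G) t' := by rw [hy, hba]; simp [prodL]
          obtain ⟨c, i0, g0, hcg⟩ := ih t'
            (by
              have h4 : t'.length = t.length - 1 := List.length_dropLast (xs := t)
              have hlen' : t.length + 1 ≤ N + 1 := by simpa using hlen
              omega)
            hne' hchaint' (hy2 ▸ hyfin)
          refine ⟨CoprodI.of av * c, i0, g0, ?_⟩
          rw [hyconj, hy2, hcg]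
          group
        · obtain ⟨c, i0, g0, hcg⟩ := ih (t' ++ [⟨i, bv * av⟩])
            (by
              have h4 : t'.length = t.length - 1 := List.length_dropLast (xs := t)
              have h5 : 0 < t.length := List.length_pos_iff.mpr ht
              have hlen' : t.length + 1 ≤ N + 1 := by simpa using hlen
              simp only [List.length_append, List.length_singleton]
              omega)
            (by
              intro u hu
              rcases List.mem_append.mp hu with h | h
              · exact hne' u h
              · simp at h; subst h; exact hba)
            (by
              apply List.isChain_append.mpr
              refine ⟨hchaint', List.isChain_singleton _, ?_⟩
              intro x hx y hy
              have h6 := (List.isChain_append.mp hchain').2.2 x hx ⟨i, bv⟩ (by simp)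
              simp only [List.head?_cons, Option.mem_some_iff] at hy
              subst hy
              exact h6)
            (by
              have h7 : prodL (G := G) (t' ++ [⟨i, bv * av⟩]) = y := by
                simp [prodL, hy]
              rw [h7]; exact hyfin)
          refine ⟨CoprodI.of av * c, i0, g0, ?_⟩
          have h8 : y = c * CoprodI.of g0 * c⁻¹ := by
            rw [← hcg]; simp [prodL, hy]
          rw [hyconj, h8]
          group
      · -- cyclically reduced with distinct end indices: contradiction
        exfalso
        set w : Word G := ⟨a :: t, hne, hchain⟩ with hw
        have hwne : w ≠ Word.empty := by
          intro h
          have : (a :: t : List (Σ i, G i)) = [] := congrArg Word.toList h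
          simp at this
        obtain ⟨i', j', nw, hnw⟩ := NeWord.of_word w hwne
        have hlist : nw.toList = a :: t := by
          rw [show nw.toList = nw.toWord.toList from rfl, hnw]
        have hi' : i' = a.1 := by
          have h1 := nw.toList_head?
          rw [hlist] at h1
          simp at h1
          rw [h1]
        have hj' : j' = (t.getLast ht).1 := by
          have h1 := nw.toList_getLast?
          rw [hlist] at h1
          have h2 : (a :: t).getLast? = some (t.getLast ht) := by
            rw [List.getLast?_eq_getLast (l := a :: t) (by simp), List.getLast_cons ht]
          rw [h2] at h1
          simp at h1
          rw [h1]
        have hij : i' ≠ j' := by rw [hi', hj']; exact hib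
        have hprod : nw.prod = prodL (G := G) (a :: t) := by
          show nw.toWord.prod = _
          rw [hnw]
          rfl
        rw [isOfFinOrder_iff_pow_eq_one] at hfin
        obtain ⟨m, hm, hfm⟩ := hfin
        exact neword_prod_pow_ne_one hij nw hm.ne' (by rw [hprod]; exact hfm)


def Fb (M N : Type) : Bool → Type := fun b => cond b M N

section Transfer

variable {M N : Type} [Group M] [Group N]

instance : ∀ b, Group (Fb M N b) := fun b => by
  cases b
  · exact (inferInstance : Group N)
  · exact (inferInstance : Group M)

def toCI : Coprod M N →* CoprodI (Fb M N) :=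
  Coprod.lift (CoprodI.of (M := Fb M N) (i := true)) (CoprodI.of (M := Fb M N) (i := false))

def fromCI : CoprodI (Fb M N) →* Coprod M N :=
  CoprodI.lift (fun b => match b with
    | true => Coprod.inl
    | false => Coprod.inr)

lemma fromCI_comp_toCI : (fromCI (M := M) (N := N)).comp toCI = MonoidHom.id _ := by
  apply Coprod.hom_ext
  · ext x
    simp only [MonoidHom.comp_apply, MonoidHom.id_apply, toCI, fromCI,
      Coprod.lift_apply_inl]
    exact CoprodI.lift_of (M := Fb M N) _ (i := true) x
  · ext x
    simp only [MonoidHom.comp_apply, MonoidHom.id_apply, toCI, fromCI,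
      Coprod.lift_apply_inr]
    exact CoprodI.lift_of (M := Fb M N) _ (i := false) x

lemma toCI_injective : Function.Injective (toCI (M := M) (N := N)) := by
  intro x y h
  have := congrArg fromCI h
  calc x = fromCI (toCI x) := by rw [← MonoidHom.comp_apply, fromCI_comp_toCI]; rfl
    _ = fromCI (toCI y) := this
    _ = y := by rw [← MonoidHom.comp_apply, fromCI_comp_toCI]; rfl

theorem isTorsionFree_ker {G' : Type} [Group G'] (φ : Coprod M N →* G')
    (hinl : Function.Injective (φ.comp Coprod.inl))
    (hinr : Function.Injective (φ.comp Coprod.inr)) :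
    Monoid.IsTorsionFree φ.ker := by
  intro g hg hfin
  exact absurd (by
    -- show g = 1
    have hxfin : IsOfFinOrder (g : Coprod M N) := φ.ker.subtype.isOfFinOrder hfin
    have hyfin : IsOfFinOrder (toCI (g : Coprod M N)) := toCI.isOfFinOrder hxfin
    obtain ⟨c, i, gg, hcg⟩ := conj_of_isOfFinOrder hyfin
    set ψ : CoprodI (Fb M N) →* G' := CoprodI.lift (fun b => match b with
      | true => φ.comp Coprod.inl
      | false => φ.comp Coprod.inr) with hψdef
    have hψ : ψ.comp toCI = φ := by
      apply Coprod.hom_ext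
      · ext x
        simp only [MonoidHom.comp_apply, toCI, hψdef, Coprod.lift_apply_inl]
        exact CoprodI.lift_of (M := Fb M N) _ (i := true) x
      · ext x
        simp only [MonoidHom.comp_apply, toCI, hψdef, Coprod.lift_apply_inr]
        exact CoprodI.lift_of (M := Fb M N) _ (i := false) x
    have hker : φ (g : Coprod M N) = 1 := g.2
    have h1 : ψ (toCI (g : Coprod M N)) = 1 := by
      rw [← MonoidHom.comp_apply, hψ]; exact hker
    rw [hcg] at h1
    simp only [map_mul, map_inv] at h1
    have h2 : ψ (CoprodI.of gg) = 1 := by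
      have h3 : ψ (CoprodI.of gg) =
          (ψ c)⁻¹ * (ψ c * ψ (CoprodI.of gg) * (ψ c)⁻¹) * ψ c := by group
      rw [h3, h1]
      group
    have h4 : gg = 1 := by
      rw [CoprodI.lift_of] at h2
      cases i
      · exact hinr (show (φ.comp Coprod.inr) gg = (φ.comp Coprod.inr) 1 by rw [map_one]; exact h2)
      · exact hinl (show (φ.comp Coprod.inl) gg = (φ.comp Coprod.inl) 1 by rw [map_one]; exact h2)
    have h5 : toCI (g : Coprod M N) = 1 := by
      rw [hcg, h4, map_one]
      group
    have h6 : (g : Coprod M N) = 1 := toCI_injective (by simpa using h5)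
    exact Subtype.ext h6) hg

end Transfer

open Multiplicative

def zmodPowHom (n : ℕ) {H : Type} [Group H] (h : H) (hh : h ^ n = 1) :
    Multiplicative (ZMod n) →* H :=
  AddMonoidHom.toMultiplicativeLeft (ZMod.lift n ⟨(zmultiplesHom (Additive H)) (Additive.ofMul h), by
    rw [zmultiplesHom_apply]
    show ((n : ℤ) • Additive.ofMul h) = 0
    have : Additive.toMul ((n : ℤ) • Additive.ofMul h) = 1 := by
      rw [toMul_zsmul]
      simpa [zpow_natCast] using hh
    exact this⟩)

lemma zmodPowHom_intCast (n : ℕ) {H : Type} [Group H] (h : H) (hh : h ^ n = 1) (m : ℤ) :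
    zmodPowHom n h hh (ofAdd ((m : ZMod n))) = h ^ m := by
  rw [zmodPowHom, AddMonoidHom.coe_toMultiplicativeLeft]
  show Additive.toMul ((ZMod.lift n _) (ofAdd ((m : ZMod n))).toAdd) = h ^ m
  have h1 : ((ofAdd ((m : ZMod n))).toAdd) = ((m : ZMod n)) := rfl
  rw [h1, ZMod.lift_coe, zmultiplesHom_apply, toMul_zsmul]
  rfl

lemma zmodPowHom_natCast (n : ℕ) {H : Type} [Group H] (h : H) (hh : h ^ n = 1) (m : ℕ) :
    zmodPowHom n h hh (ofAdd ((m : ZMod n))) = h ^ m := by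
  have := zmodPowHom_intCast n h hh (m : ℤ)
  rw [Int.cast_natCast, zpow_natCast] at this
  exact this

variable (p : ℕ) [Fact p.Prime]

/-- multiplication action of units as a hom into MulAut of the multiplicative group -/
def A : (ZMod p)ˣ →* MulAut (Multiplicative (ZMod p)) where
  toFun v := AddEquiv.toMultiplicative (DistribMulAction.toAddAut (ZMod p)ˣ (ZMod p) v)
  map_one' := by
    apply MulEquiv.ext
    intro x
    show ofAdd (((1 : (ZMod p)ˣ) : ZMod p) * x.toAdd) = x
    simp
  map_mul' := fun v w => by
    apply MulEquiv.ext
    intro x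
    show ofAdd (((v * w : (ZMod p)ˣ) : ZMod p) * x.toAdd)
      = ofAdd ((v : ZMod p) * ((w : ZMod p) * x.toAdd))
    simp [mul_assoc]

lemma A_apply (v : (ZMod p)ˣ) (m : ZMod p) : A p v (ofAdd m) = ofAdd ((v : ZMod p) * m) := rfl

end FPTorsion

namespace FPTorsion.Construction

open SemidirectProduct Multiplicative FPTorsion

variable (p : ℕ) [Fact p.Prime]

theorem exists_group (hp : p.Prime) (hp6 : p % 6 = 1) :
    ∃ (G : Type) (_ : Group G) (_ : Fintype G),
      Fintype.card G = 6 * p ∧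
      ∃ φ : Coprod (Multiplicative (ZMod 2)) (Multiplicative (ZMod 3)) →* G,
        Function.Surjective φ ∧ Monoid.IsTorsionFree φ.ker := by
  have hp7 : 7 ≤ p := by
    have := hp.two_le
    omega
  -- an element of order 6 in the units
  obtain ⟨g0, hg0⟩ := IsCyclic.exists_ofOrder_eq_natCard (α := (ZMod p)ˣ)
  rw [Nat.card_eq_fintype_card, ZMod.card_units] at hg0
  have h6dvd : 6 ∣ p - 1 := by omega
  obtain ⟨m, hm⟩ := h6dvd
  have hmne : m ≠ 0 := by omega
  set u := g0 ^ m with hu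
  have hord : orderOf u = 6 := by
    rw [hu, orderOf_pow, hg0, hm, Nat.gcd_eq_right ⟨6, by ring⟩,
      Nat.mul_div_cancel _ (Nat.pos_of_ne_zero hmne)]
  -- pass to the field element
  set a : ZMod p := (u : ZMod p) with ha
  have hu6 : u ^ 6 = 1 := by rw [← hord]; exact pow_orderOf_eq_one u
  have ha6 : a ^ 6 = 1 := by
    rw [ha, ← Units.val_pow_eq_pow_val, hu6, Units.val_one]
  have ha3ne : a ^ 3 ≠ 1 := by
    intro h
    have : u ^ 3 = 1 := Units.ext (by rw [Units.val_pow_eq_pow_val, Units.val_one]; exact h)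
    rw [← orderOf_dvd_iff_pow_eq_one, hord] at this
    omega
  have ha2ne : a ^ 2 ≠ 1 := by
    intro h
    have : u ^ 2 = 1 := Units.ext (by rw [Units.val_pow_eq_pow_val, Units.val_one]; exact h)
    rw [← orderOf_dvd_iff_pow_eq_one, hord] at this
    omega
  have ha3 : a ^ 3 = -1 := by
    rcases mul_self_eq_one_iff.mp (show a ^ 3 * a ^ 3 = 1 by rw [← pow_add]; exact ha6) with h | h
    · exact absurd h ha3ne
    · exact h
  have hsum : a ^ 4 + a ^ 2 + 1 = 0 := by
    have hfact : (a ^ 2 - 1) * (a ^ 4 + a ^ 2 + 1) = 0 := by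
      have : (a ^ 2 - 1) * (a ^ 4 + a ^ 2 + 1) = a ^ 6 - 1 := by ring
      rw [this, ha6, sub_self]
    rcases mul_eq_zero.mp hfact with h | h
    · exact absurd (by linear_combination h) ha2ne
    · exact h
  -- the semidirect product
  have hA6 : (A p u) ^ 6 = 1 := by rw [← map_pow, hu6, map_one]
  set Φ : Multiplicative (ZMod 6) →* MulAut (Multiplicative (ZMod p)) :=
    zmodPowHom 6 (A p u) hA6 with hΦ
  set Gp := (Multiplicative (ZMod p)) ⋊[Φ] (Multiplicative (ZMod 6)) with hGp
  have hPhiN : ∀ (k : ℕ) (x : ZMod p), Φ (ofAdd ((k : ZMod 6))) (ofAdd x) = ofAdd (a ^ k * x) := by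
    intro k x
    rw [hΦ, zmodPowHom_natCast, ← map_pow, A_apply, Units.val_pow_eq_pow_val, ← ha]
  have hPhi : ∀ (k : ZMod 6) (x : ZMod p), Φ (ofAdd k) (ofAdd x) = ofAdd (a ^ k.val * x) := by
    intro k x
    conv_lhs => rw [show k = ((k.val : ℕ) : ZMod 6) by simp [ZMod.natCast_val, ZMod.cast_id]]
    exact hPhiN k.val x
  set s : Gp := ⟨ofAdd 0, ofAdd 3⟩ with hs
  set t : Gp := ⟨ofAdd 1, ofAdd 2⟩ with ht
  have hmul : ∀ (x y : Gp), x * y =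
      ⟨x.left * Φ x.right y.left, x.right * y.right⟩ := fun x y => rfl
  have hs2 : s * s = 1 := by
    refine SemidirectProduct.ext ?_ ?_
    · show (ofAdd (0 : ZMod p)) * Φ (ofAdd 3) (ofAdd 0) = 1
      rw [hPhi]
      simp
    · show (ofAdd (3 : ZMod 6)) * (ofAdd 3) = 1
      rw [← ofAdd_add]
      decide
  have htne : (t : Gp).right = ofAdd (2 : ZMod 6) := rfl
  have ht2 : t * t = ⟨ofAdd (1 + a ^ 2), ofAdd 4⟩ := by
    refine SemidirectProduct.ext ?_ ?_
    · show (ofAdd (1 : ZMod p)) * Φ (ofAdd 2) (ofAdd 1) = ofAdd (1 + a ^ 2)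
      rw [hPhi, ← ofAdd_add]
      congr 1
      show 1 + a ^ (2 : ZMod 6).val * 1 = 1 + a ^ 2
      norm_num [show ((2 : ZMod 6)).val = 2 from rfl]
    · show (ofAdd (2 : ZMod 6)) * (ofAdd 2) = ofAdd 4
      rw [← ofAdd_add]
      decide
  have ht3 : t * t * t = 1 := by
    rw [ht2]
    refine SemidirectProduct.ext ?_ ?_
    · show (ofAdd (1 + a ^ 2)) * Φ (ofAdd 4) (ofAdd 1) = 1
      rw [hPhi, ← ofAdd_add]
      have : (1 + a ^ 2) + a ^ (4 : ZMod 6).val * 1 = 0 := by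
        rw [show ((4 : ZMod 6)).val = 4 from rfl]
        linear_combination hsum
      rw [this]
      rfl
    · show (ofAdd (4 : ZMod 6)) * (ofAdd 2) = 1
      rw [← ofAdd_add]
      decide
  -- the translation element
  have htau : s * t * s * t * t = SemidirectProduct.inl (ofAdd (-2 : ZMod p)) := by
    have h1 : s * t = ⟨ofAdd (-1 : ZMod p), ofAdd (5 : ZMod 6)⟩ := by
      refine SemidirectProduct.ext ?_ ?_
      · show (ofAdd (0 : ZMod p)) * Φ (ofAdd 3) (ofAdd 1) = ofAdd (-1)
        rw [hPhi, ← ofAdd_add]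
        congr 1
        rw [show ((3 : ZMod 6)).val = 3 from rfl]
        linear_combination ha3
      · show (ofAdd (3 : ZMod 6)) * (ofAdd 2) = ofAdd 5
        rw [← ofAdd_add]; decide
    have h2 : s * t * s = ⟨ofAdd (-1 : ZMod p), ofAdd (2 : ZMod 6)⟩ := by
      rw [h1]
      refine SemidirectProduct.ext ?_ ?_
      · show (ofAdd (-1 : ZMod p)) * Φ (ofAdd 5) (ofAdd 0) = ofAdd (-1)
        rw [hPhi, ← ofAdd_add]
        congr 1
        rw [mul_zero, add_zero]
      · show (ofAdd (5 : ZMod 6)) * (ofAdd 3) = ofAdd 2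
        rw [← ofAdd_add]; decide
    have h3 : s * t * s * t * t = (s * t * s) * (t * t) := by group
    rw [h3, h2, ht2]
    refine SemidirectProduct.ext ?_ ?_
    · show (ofAdd (-1 : ZMod p)) * Φ (ofAdd 2) (ofAdd (1 + a ^ 2)) = ofAdd (-2)
      rw [hPhi, ← ofAdd_add]
      congr 1
      rw [show ((2 : ZMod 6)).val = 2 from rfl]
      linear_combination hsum
    · show (ofAdd (2 : ZMod 6)) * (ofAdd 4) = ofAdd 0
      rw [← ofAdd_add]; decide
  -- the two maps
  have hs2' : s ^ 2 = 1 := by rw [pow_two]; exact hs2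
  have ht3' : t ^ 3 = 1 := by rw [pow_succ, pow_two]; exact ht3
  set f2 : Multiplicative (ZMod 2) →* Gp := zmodPowHom 2 s hs2' with hf2
  set f3 : Multiplicative (ZMod 3) →* Gp := zmodPowHom 3 t ht3' with hf3
  have hf2one : f2 (ofAdd (1 : ZMod 2)) = s := by
    have := zmodPowHom_natCast 2 s hs2' 1
    simpa using this
  have hf3one : f3 (ofAdd (1 : ZMod 3)) = t := by
    have := zmodPowHom_natCast 3 t ht3' 1
    simpa using this
  have hf3two : f3 (ofAdd (2 : ZMod 3)) = t * t := by
    have := zmodPowHom_natCast 3 t ht3' 2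
    rw [pow_two] at this
    simpa using this
  have hsne : s ≠ 1 := by
    intro h
    have := congrArg SemidirectProduct.right h
    rw [hs, SemidirectProduct.one_right] at this
    exact absurd (show ofAdd ((3 : ZMod 6)) = (1 : Multiplicative (ZMod 6)) from this) (by decide)
  have htne1 : t ≠ 1 := by
    intro h
    have := congrArg SemidirectProduct.right h
    rw [ht, SemidirectProduct.one_right] at this
    exact absurd (show ofAdd ((2 : ZMod 6)) = (1 : Multiplicative (ZMod 6)) from this) (by decide)
  have ht2ne1 : t * t ≠ 1 := by
    intro h
    have := congrArg SemidirectProduct.right h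
    rw [ht2, SemidirectProduct.one_right] at this
    exact absurd (show ofAdd ((4 : ZMod 6)) = (1 : Multiplicative (ZMod 6)) from this) (by decide)
  have hf2inj : Function.Injective f2 := by
    rw [injective_iff_map_eq_one]
    intro x hx
    have hcases : ∀ k : ZMod 2, k = 0 ∨ k = 1 := by decide
    rcases hcases x.toAdd with h | h
    · have : x = ofAdd (0 : ZMod 2) := by rw [← h]; rfl
      rw [this]; rfl
    · exfalso
      have hx1 : x = ofAdd (1 : ZMod 2) := by rw [← h]; rfl
      rw [hx1, hf2one] at hx
      exact hsne hx
  have hf3inj : Function.Injective f3 := by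
    rw [injective_iff_map_eq_one]
    intro x hx
    have hcases : ∀ k : ZMod 3, k = 0 ∨ k = 1 ∨ k = 2 := by decide
    rcases hcases x.toAdd with h | h | h
    · have : x = ofAdd (0 : ZMod 3) := by rw [← h]; rfl
      rw [this]; rfl
    · exfalso
      have hx1 : x = ofAdd (1 : ZMod 3) := by rw [← h]; rfl
      rw [hx1, hf3one] at hx
      exact htne1 hx
    · exfalso
      have hx1 : x = ofAdd (2 : ZMod 3) := by rw [← h]; rfl
      rw [hx1, hf3two] at hx
      exact ht2ne1 hx
  -- generation
  set φ : Coprod (Multiplicative (ZMod 2)) (Multiplicative (ZMod 3)) →* Gp :=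
    Coprod.lift f2 f3 with hφ
  set K : Subgroup Gp := f2.range ⊔ f3.range with hK
  have hsK : s ∈ K := Subgroup.mem_sup_left ⟨ofAdd 1, hf2one⟩
  have htK : t ∈ K := Subgroup.mem_sup_right ⟨ofAdd 1, hf3one⟩
  have htauK : SemidirectProduct.inl (ofAdd (-2 : ZMod p)) ∈ K := by
    rw [← htau]
    exact mul_mem (mul_mem (mul_mem (mul_mem hsK htK) hsK) htK) htK
  have h2ne0 : (-2 : ZMod p) ≠ 0 := by
    rw [neg_ne_zero]
    intro h
    rw [show ((2 : ZMod p)) = ((2 : ℕ) : ZMod p) by norm_cast] at h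
    rw [ZMod.natCast_eq_zero_iff] at h
    have := Nat.le_of_dvd (by norm_num) h
    omega
  have htransK : ∀ x : ZMod p, SemidirectProduct.inl (ofAdd x) ∈ K := by
    intro x
    set k := (x * (-2 : ZMod p)⁻¹).val with hk
    have hpow : (SemidirectProduct.inl (φ := Φ) (ofAdd (-2 : ZMod p))) ^ k =
        SemidirectProduct.inl (ofAdd x) := by
      rw [← map_pow, ← ofAdd_nsmul]
      congr 2
      rw [nsmul_eq_mul, hk, ZMod.natCast_val, ZMod.cast_id, mul_assoc,
        inv_mul_cancel₀ h2ne0, mul_one]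
    rw [← hpow]
    exact pow_mem htauK k
  have hright1K : ∀ x : Gp, x.right = 1 → x ∈ K := by
    intro x hx
    have hxeq : x = SemidirectProduct.inl x.left := by
      refine SemidirectProduct.ext ?_ ?_
      · rfl
      · rw [hx]; rfl
    rw [hxeq, show x.left = ofAdd x.left.toAdd from rfl]
    exact htransK _
  have hsttK : s * t * t ∈ K := mul_mem (mul_mem hsK htK) htK
  have hsttR : (s * t * t).right = ofAdd (1 : ZMod 6) := by
    show (ofAdd (3 : ZMod 6)) * (ofAdd 2) * (ofAdd 2) = ofAdd 1
    rw [← ofAdd_add, ← ofAdd_add]; decide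
  have htop : ∀ x : Gp, x ∈ K := by
    intro x
    set k := x.right.toAdd.val with hk
    set v : Gp := (s * t * t) ^ k with hv
    have hvK : v ∈ K := pow_mem hsttK k
    have hvr : v.right = x.right := by
      have h1 : v.right = rightHom v := rfl
      rw [h1, hv, map_pow]
      have h2 : rightHom (s * t * t) = ofAdd (1 : ZMod 6) := hsttR
      rw [h2, ← ofAdd_nsmul, nsmul_eq_mul, mul_one, hk, ZMod.natCast_val, ZMod.cast_id]
      exact congrArg ofAdd rfl
    have hxvK : x * v⁻¹ ∈ K := by
      apply hright1K
      rw [SemidirectProduct.mul_right, SemidirectProduct.inv_right, hvr, mul_inv_cancel]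
    have : x = (x * v⁻¹) * v := (inv_mul_cancel_right x v).symm
    rw [this]
    exact mul_mem hxvK hvK
  have hsurj : Function.Surjective φ := by
    rw [← MonoidHom.range_eq_top, hφ, Coprod.range_lift, ← hK]
    exact eq_top_iff.mpr fun x _ => htop x
  -- torsion-free kernel
  have htf : Monoid.IsTorsionFree φ.ker := by
    apply isTorsionFree_ker
    · rw [hφ, Coprod.lift_comp_inl]; exact hf2inj
    · rw [hφ, Coprod.lift_comp_inr]; exact hf3inj
  -- cardinality
  set e : Gp ≃ (Multiplicative (ZMod p) × Multiplicative (ZMod 6)) :=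
    ⟨fun x => (x.left, x.right), fun q => ⟨q.1, q.2⟩, fun x => rfl, fun q => rfl⟩ with he
  haveI : Fintype Gp := Fintype.ofEquiv _ e.symm
  have hcard : Fintype.card Gp = 6 * p := by
    rw [Fintype.card_congr e, Fintype.card_prod, Fintype.card_multiplicative,
      Fintype.card_multiplicative, ZMod.card, ZMod.card]
    ring
  exact ⟨Gp, inferInstance, inferInstance, hcard, φ, hsurj, htf⟩

end FPTorsion.Construction

open Monoid

theorem stmt_9 :
    {g : ℕ | 1 < g ∧
      ∃ (G : Type) (_ : Group G) (_ : Fintype G),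
        Fintype.card G = 6 * (g - 1) ∧
        ∃ φ : Coprod (Multiplicative (ZMod 2)) (Multiplicative (ZMod 3)) →* G,
          Function.Surjective φ ∧ Monoid.IsTorsionFree φ.ker}.Infinite := by
  have hP : {p : ℕ | p.Prime ∧ p ≡ 1 [MOD 6]}.Infinite :=
    Nat.infinite_setOf_prime_modEq_one (by norm_num)
  have himg : ((fun p : ℕ => p + 1) '' {p : ℕ | p.Prime ∧ p ≡ 1 [MOD 6]}).Infinite :=
    hP.image (fun a _ b _ h => by omega)
  apply himg.mono
  rintro g ⟨q, ⟨hq, hq6⟩, rfl⟩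
  have hq6' : q % 6 = 1 := by
    have : q % 6 = 1 % 6 := hq6
    simpa using this
  haveI : Fact q.Prime := ⟨hq⟩
  obtain ⟨G, iG, iF, hcard, φ, hsurj, htf⟩ := FPTorsion.Construction.exists_group q hq hq6'
  refine ⟨by simpa using hq.pos, G, iG, iF, by simpa using hcard, φ, hsurj, htf⟩
end

section
/- Let n ≥ 3 be an integer. Then there exists a surjective group homomorphism from the free product ℤ/2 ∗ ℤ/n onto the dihedral group D_n of order 2n whose kernel is torsion-free. -/
open Monoid Monoid.CoprodI

namespace StmtAux


variable {ι : Type*} [DecidableEq ι] {G : ι → Type*} [∀ i, Group (G i)] [∀ i, DecidableEq (G i)]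

theorem word_prod_injective : Function.Injective (Word.prod : Word G → CoprodI G) :=
  Word.equiv.symm.injective

theorem neword_prod_ne_one {i j : ι} (w : NeWord G i j) : w.prod ≠ 1 := by
  intro h
  have h1 : w.toWord = Word.empty := word_prod_injective (by simpa [NeWord.prod] using h)
  have h2 := w.toList_ne_nil
  rw [show w.toList = w.toWord.toList from rfl, h1] at h2
  exact h2 rfl

theorem conj_of_isOfFinOrder : ∀ (k : ℕ) (w : Word G), w.toList.length ≤ k →
    IsOfFinOrder w.prod →
    w.prod = 1 ∨ ∃ (i : ι) (g : G i) (c : CoprodI G), w.prod = c * of g * c⁻¹ := by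
  intro k
  induction k with
  | zero =>
    intro w hw _
    left
    have : w.toList = [] := List.eq_nil_of_length_eq_zero (Nat.le_zero.mp hw)
    simp [Word.prod, this]
  | succ k ih =>
    intro w hw hord
    rcases hL : w.toList with _ | ⟨a, l⟩
    · left; simp [Word.prod, hL]
    rcases l with _ | ⟨y, l₂⟩
    · right
      exact ⟨a.1, a.2, 1, by simp [Word.prod, hL]⟩
    set l : List (Σ i, G i) := y :: l₂ with hldef
    have hlne : l ≠ [] := by simp [hldef]
    have hlen : l.length ≤ k := by
      have := hw
      rw [hL] at this
      simpa using this
    by_cases h : a.1 = (l.getLast hlne).1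
    · -- head index = last index: conjugate to a shorter word
      rcases hbeq : l.getLast hlne with ⟨j, bg⟩
      rw [hbeq] at h
      dsimp at h
      subst h
      have hsplit : l.dropLast ++ [(⟨a.1, bg⟩ : Σ i, G i)] = l := by
        rw [← hbeq]; exact List.dropLast_append_getLast hlne
      set P : CoprodI G := (l.dropLast.map fun p => of p.2).prod with hP
      have hprod : w.prod = of a.2 * (P * of bg) := by
        rw [Word.prod, hL, ← hsplit]
        simp [hP]
      set y0 : CoprodI G := P * of (bg * a.2) with hy0
      have hy : y0 = (of a.2)⁻¹ * w.prod * of a.2 := by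
        rw [hprod, hy0, map_mul]
        group
      have hw2 : w.prod = of a.2 * y0 * (of a.2)⁻¹ := by rw [hy]; group
      have hyord : IsOfFinOrder y0 := by
        obtain ⟨m, hm, hpow⟩ := isOfFinOrder_iff_pow_eq_one.mp hord
        refine isOfFinOrder_iff_pow_eq_one.mpr ⟨m, hm, ?_⟩
        have : y0 = (of a.2)⁻¹ * w.prod * ((of a.2)⁻¹)⁻¹ := by rw [hy]; group
        rw [this, conj_pow, hpow]
        group
      have hchain : (w.toList).Chain' fun p q => p.1 ≠ q.1 := w.chain_ne
      rw [hL] at hchain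
      have hne1 := w.ne_one
      rw [hL] at hne1
      by_cases hc : bg * a.2 = 1
      · -- cancellation: use the shorter word l.dropLast
        set w₂ : Word G := ⟨l.dropLast,
          fun p hp => hne1 p (List.mem_cons_of_mem _ ((List.dropLast_sublist l).subset hp)),
          hchain.tail.dropLast⟩ with hw₂
        have hprod₂ : w₂.prod = P := rfl
        have hlen₂ : w₂.toList.length ≤ k := by
          simp only [hw₂, List.length_dropLast]
          exact le_trans (Nat.sub_le _ _) hlen
        have hy0P : y0 = P := by rw [hy0, hc, map_one, mul_one]
        rcases ih w₂ hlen₂ (by rw [hprod₂, ← hy0P]; exact hyord) with h1 | ⟨i, g, c, hc2⟩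
        · left
          have hone : y0 = 1 := by rw [hy0P, ← hprod₂, h1]
          rw [hw2, hone]
          group
        · right
          refine ⟨i, g, of a.2 * c, ?_⟩
          have : y0 = c * of g * c⁻¹ := by rw [hy0P, ← hprod₂, hc2]
          rw [hw2, this]
          group
      · -- no cancellation: merge last and first letters
        have hmapeq : (l.dropLast ++ [(⟨a.1, bg * a.2⟩ : Σ i, G i)]).map Sigma.fst
            = l.map Sigma.fst := by
          conv_rhs => rw [← hsplit]
          simp
        set w₂ : Word G := ⟨l.dropLast ++ [(⟨a.1, bg * a.2⟩ : Σ i, G i)],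
          by
            intro p hp
            rcases List.mem_append.mp hp with hp | hp
            · exact hne1 p (List.mem_cons_of_mem _ ((List.dropLast_sublist l).subset hp))
            · rw [List.mem_singleton] at hp
              subst hp
              exact hc,
          (List.isChain_map Sigma.fst).mp
            (hmapeq ▸ (List.isChain_map Sigma.fst).mpr hchain.tail)⟩ with hw₂
        have hprod₂ : w₂.prod = y0 := by
          rw [hy0, hP, Word.prod]
          simp [hw₂]
        have hlen₂ : w₂.toList.length ≤ k := by
          simp only [hw₂, List.length_append, List.length_dropLast, List.length_singleton]
          have : l.length - 1 + 1 = l.length := by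
            simp [hldef]
          omega
        rcases ih w₂ hlen₂ (by rw [hprod₂]; exact hyord) with h1 | ⟨i, g, c, hc2⟩
        · left
          have hone : y0 = 1 := by rw [← hprod₂, h1]
          rw [hw2, hone]
          group
        · right
          refine ⟨i, g, of a.2 * c, ?_⟩
          have : y0 = c * of g * c⁻¹ := by rw [← hprod₂, hc2]
          rw [hw2, this]
          group
    · -- head index ≠ last index: infinite order, contradiction
      exfalso
      have hwne : w ≠ Word.empty := by
        intro he
        rw [he] at hL
        simp at hL
      obtain ⟨i', j', w', hw'⟩ := NeWord.of_word w hwne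
      have hlist : w'.toList = w.toList := congrArg Word.toList hw'
      have hh : (⟨i', w'.head⟩ : Σ i, G i) = a := by
        have := w'.toList_head?
        rw [hlist, hL] at this
        simpa using this.symm
      have hg : (⟨j', w'.last⟩ : Σ i, G i) = l.getLast hlne := by
        have := w'.toList_getLast?
        rw [hlist, hL] at this
        rw [List.getLast?_eq_getLast (by simp)] at this
        rw [List.getLast_cons hlne] at this
        simpa using this.symm
      have hi' : i' = a.1 := congrArg Sigma.fst hh
      have hj' : j' = (l.getLast hlne).1 := congrArg Sigma.fst hg
      have hne' : j' ≠ i' := by rw [hi', hj']; exact fun hx => h hx.symm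
      have hprodw' : w'.prod = w.prod := by rw [NeWord.prod, hw']
      have key : ∀ m : ℕ, ∃ v : NeWord G i' j', v.prod = w.prod ^ (m + 1) := by
        intro m
        induction m with
        | zero => exact ⟨w', by rw [hprodw', pow_one]⟩
        | succ m ihm =>
          obtain ⟨v, hv⟩ := ihm
          exact ⟨v.append hne' w', by rw [NeWord.append_prod, hv, hprodw', ← pow_succ]⟩
      obtain ⟨m, hm, hpow⟩ := isOfFinOrder_iff_pow_eq_one.mp hord
      obtain ⟨v, hv⟩ := key (m - 1)
      rw [Nat.sub_add_cancel hm] at hv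
      exact neword_prod_ne_one v (hv.trans hpow)


theorem coprodI_conj_of_isOfFinOrder {ι : Type*} [DecidableEq ι] {G : ι → Type*}
    [∀ i, Group (G i)] [∀ i, DecidableEq (G i)] (x : CoprodI G) (hx : IsOfFinOrder x) :
    x = 1 ∨ ∃ (i : ι) (g : G i) (c : CoprodI G), x = c * of g * c⁻¹ := by
  have hprod : (Word.equiv x).prod = x := Word.equiv.symm_apply_apply x
  have h := conj_of_isOfFinOrder (Word.equiv x).toList.length (Word.equiv x) le_rfl
    (by rw [hprod]; exact hx)
  rw [hprod] at h
  exact h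

/-- The family `Bool → Type` with values `Multiplicative (ZMod 2)` and
`Multiplicative (ZMod n)`. -/
abbrev Fam (n : ℕ) : Bool → Type :=
  fun b => cond b (Multiplicative (ZMod 2)) (Multiplicative (ZMod n))

instance (n : ℕ) (b : Bool) : Group (Fam n b) := by
  cases b
  · exact inferInstanceAs (Group (Multiplicative (ZMod n)))
  · exact inferInstanceAs (Group (Multiplicative (ZMod 2)))

instance (n : ℕ) (b : Bool) : DecidableEq (Fam n b) := by
  cases b
  · exact inferInstanceAs (DecidableEq (Multiplicative (ZMod n)))
  · exact inferInstanceAs (DecidableEq (Multiplicative (ZMod 2)))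

/-- The homomorphism from `Multiplicative (ZMod k)` determined by an element `g`
with `g ^ k = 1`. -/
def zmodHom {H : Type*} [Group H] (k : ℕ) [NeZero k] (g : H) (hg : g ^ k = 1) :
    Multiplicative (ZMod k) →* H where
  toFun x := g ^ (Multiplicative.toAdd x).val
  map_one' := by simp
  map_mul' x y := by
    have hmod : ∀ m : ℕ, g ^ (m % k) = g ^ m := by
      intro m
      conv_rhs => rw [← Nat.div_add_mod m k]
      rw [pow_add, pow_mul, hg, one_pow, one_mul]
    show g ^ (Multiplicative.toAdd (x * y)).val = _
    rw [toAdd_mul, ZMod.val_add, hmod, pow_add]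

theorem zmodHom_apply {H : Type*} [Group H] (k : ℕ) [NeZero k] (g : H) (hg : g ^ k = 1)
    (x : Multiplicative (ZMod k)) : zmodHom k g hg x = g ^ (Multiplicative.toAdd x).val :=
  rfl

variable (n : ℕ) [NeZero n]

open DihedralGroup

theorem sr_zero_sq : (sr 0 : DihedralGroup n) ^ 2 = 1 := by
  rw [pow_two]; exact sr_mul_self 0

/-- The map `ℤ/2 → D_n`. -/
def fA : Multiplicative (ZMod 2) →* DihedralGroup n := zmodHom 2 (sr 0) (sr_zero_sq n)

/-- The map `ℤ/n → D_n`. -/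
def fB : Multiplicative (ZMod n) →* DihedralGroup n := zmodHom n (r 1) r_one_pow_n

/-- The family of maps to `D_n`. -/
def f : ∀ b, Fam n b →* DihedralGroup n := fun b =>
  (match b with
    | true => fA n
    | false => fB n : Fam n b →* DihedralGroup n)

/-- The map from the free product to `D_n`. -/
def ψ : CoprodI (Fam n) →* DihedralGroup n := CoprodI.lift (f n)

/-- The comparison map from the binary coproduct to the indexed one. -/
def t : Coprod (Multiplicative (ZMod 2)) (Multiplicative (ZMod n)) →* CoprodI (Fam n) :=
  Coprod.lift (CoprodI.of (M := Fam n) (i := true)) (CoprodI.of (M := Fam n) (i := false))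

/-- The comparison map from the indexed coproduct to the binary one. -/
def u : CoprodI (Fam n) →* Coprod (Multiplicative (ZMod 2)) (Multiplicative (ZMod n)) :=
  CoprodI.lift (fun b =>
    (match b with
      | true => Coprod.inl
      | false => Coprod.inr : Fam n b →* _))

theorem u_t (z : Coprod (Multiplicative (ZMod 2)) (Multiplicative (ZMod n))) :
    u n (t n z) = z := by
  have h : (u n).comp (t n) = MonoidHom.id _ := Coprod.hom_ext rfl rfl
  exact DFunLike.congr_fun h z

theorem fB_ofAdd (i : ZMod n) : fB n (Multiplicative.ofAdd i) = r i := by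
  rw [fB, zmodHom_apply, r_one_pow]
  congr 1
  exact ZMod.natCast_rightInverse i

theorem fA_ofAdd_one : fA n (Multiplicative.ofAdd 1) = sr 0 := by
  rw [fA, zmodHom_apply]
  norm_num [ZMod.val_one]

theorem f_ker (b : Bool) (g : Fam n b) (hg : f n b g = 1) : g = 1 := by
  cases b
  · have h1 : (r 1 : DihedralGroup n) ^ (Multiplicative.toAdd g).val = 1 := hg
    rw [r_one_pow, one_def] at h1
    have h2 : ((Multiplicative.toAdd g).val : ZMod n) = 0 := by injection h1
    have hdvd : n ∣ (Multiplicative.toAdd g).val :=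
      (ZMod.natCast_eq_zero_iff _ _).mp h2
    have hlt : (Multiplicative.toAdd g).val < n := ZMod.val_lt _
    have h0 : (Multiplicative.toAdd g).val = 0 := by
      rcases hdvd with ⟨c, hc⟩
      rcases c with _ | c
      · omega
      · nlinarith [hc, hlt]
    have h3 : Multiplicative.toAdd g = (0 : ZMod n) := (ZMod.val_eq_zero _).mp h0
    exact ofAdd_toAdd g ▸ congrArg Multiplicative.ofAdd h3
  · have hv : (Multiplicative.toAdd g).val < 2 := ZMod.val_lt _
    have h1 : (sr 0 : DihedralGroup n) ^ (Multiplicative.toAdd g).val = 1 := hg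
    have hv2 : (Multiplicative.toAdd g).val = 0 ∨ (Multiplicative.toAdd g).val = 1 := by omega
    rcases hv2 with h0 | h0
    · have h2 : Multiplicative.toAdd g = (0 : ZMod 2) := (ZMod.val_eq_zero _).mp h0
      exact ofAdd_toAdd g ▸ congrArg Multiplicative.ofAdd h2
    · rw [h0, pow_one, one_def] at h1
      exact absurd h1 (by intro h; cases h)

end StmtAux

open StmtAux DihedralGroup

theorem stmt_11 (n : ℕ) (hn : 3 ≤ n) :
    ∃ φ : Coprod (Multiplicative (ZMod 2)) (Multiplicative (ZMod n)) →* DihedralGroup n,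
      Function.Surjective φ ∧ Monoid.IsTorsionFree φ.ker := by
  haveI : NeZero n := ⟨by omega⟩
  refine ⟨(ψ n).comp (t n), ?_, ?_⟩
  · -- surjectivity
    intro d
    rcases d with i | i
    · refine ⟨Coprod.inr (Multiplicative.ofAdd i), ?_⟩
      show ψ n (t n (Coprod.inr (Multiplicative.ofAdd i))) = r i
      exact fB_ofAdd n i
    · refine ⟨Coprod.inl (Multiplicative.ofAdd 1) * Coprod.inr (Multiplicative.ofAdd i), ?_⟩
      show ψ n (t n (Coprod.inl (Multiplicative.ofAdd 1) * Coprod.inr (Multiplicative.ofAdd i)))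
        = sr i
      rw [map_mul, map_mul]
      show fA n (Multiplicative.ofAdd 1) * fB n (Multiplicative.ofAdd i) = sr i
      rw [fA_ofAdd_one, fB_ofAdd, sr_mul_r, zero_add]
  · -- torsion-free kernel
    intro g hg hford
    apply hg
    have hmem : (↑g : Coprod (Multiplicative (ZMod 2)) (Multiplicative (ZMod n))) ∈
        ((ψ n).comp (t n)).ker := g.2
    have hford1 : IsOfFinOrder
        (↑g : Coprod (Multiplicative (ZMod 2)) (Multiplicative (ZMod n))) :=
      (((ψ n).comp (t n)).ker.subtype).isOfFinOrder hford
    have hford2 : IsOfFinOrder (t n ↑g) := (t n).isOfFinOrder hford1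
    have hψ1 : ψ n (t n ↑g) = 1 := hmem
    have hx1 : t n (↑g) = 1 := by
      rcases coprodI_conj_of_isOfFinOrder (t n ↑g) hford2 with h1 | ⟨i, a, c, hc⟩
      · exact h1
      · have h2 : ψ n (c * CoprodI.of a * c⁻¹) = 1 := hc ▸ hψ1
        have h2' : ψ n c * f n i a * (ψ n c)⁻¹ = 1 := by
          rw [← h2, map_mul, map_mul, map_inv]
          rfl
        have ha : f n i a = 1 := by
          have h3 := congrArg (fun z => (ψ n c)⁻¹ * z * (ψ n c)) h2'
          simpa [mul_assoc] using h3
        rw [f_ker n i a ha, map_one, mul_one, mul_inv_cancel] at hc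
        exact hc
    have hcoe : (↑g : Coprod (Multiplicative (ZMod 2)) (Multiplicative (ZMod n))) = 1 := by
      have h4 := congrArg (u n) hx1
      rwa [u_t, map_one] at h4
    exact Subtype.ext hcoe
end

section
/- There exists a surjective group homomorphism from the free product ℤ/2 ∗ ℤ/3 onto the alternating group A₄ on 4 letters whose kernel is torsion-free. -/
open Monoid

namespace Stmt13Aux

open Monoid.CoprodI Equiv

set_option linter.unusedSectionVars false

section Classification

variable {ι : Type*} [DecidableEq ι] {G : ι → Type*} [∀ i, Group (G i)] [∀ i, DecidableEq (G i)]

theorem prod_injective : Function.Injective (Word.prod : Word G → CoprodI G) :=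
  Word.equiv.symm.injective

theorem neword_prod_ne_one {i j : ι} (w : NeWord G i j) : w.prod ≠ 1 := by
  have h : w.toWord ≠ Word.empty := by
    intro h
    have := w.toList_ne_nil
    rw [show w.toList = w.toWord.toList from rfl, h] at this
    exact this rfl
  intro h1
  exact h (prod_injective (by rw [show Word.prod w.toWord = w.prod from rfl, h1, Word.prod_empty]))

/-- powers of a cyclically reduced word -/
def powNeWord {i j : ι} (hij : j ≠ i) (w : NeWord G i j) : ℕ → NeWord G i j
  | 0 => w
  | n + 1 => NeWord.append (powNeWord hij w n) hij w

theorem powNeWord_prod {i j : ι} (hij : j ≠ i) (w : NeWord G i j) (n : ℕ) :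
    (powNeWord hij w n).prod = w.prod ^ (n + 1) := by
  induction n with
  | zero => simp [powNeWord]
  | succ n ih => rw [powNeWord, NeWord.append_prod, ih]; group

theorem infinite_order_of_ne {i j : ι} (hij : i ≠ j) (w : NeWord G i j) :
    ¬ IsOfFinOrder w.prod := by
  intro h
  obtain ⟨n, hn, hpow⟩ := h.exists_pow_eq_one
  obtain ⟨m, rfl⟩ : ∃ m, n = m + 1 := ⟨n - 1, by omega⟩
  exact neword_prod_ne_one (powNeWord (Ne.symm hij) w m) (by rw [powNeWord_prod]; exact hpow)

set_option maxHeartbeats 1000000 in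
/-- Every element of finite order in a free product of groups is conjugate to an element
of one of the factors. -/
theorem conj_of_isOfFinOrder [Nonempty ι] :
    ∀ (n : ℕ) (x : CoprodI G), (Word.equiv x).toList.length ≤ n →
    IsOfFinOrder x → ∃ (c : CoprodI G) (i : ι) (m : G i), x = c * CoprodI.of m * c⁻¹ := by
  intro n
  induction n with
  | zero =>
    intro x hlen _
    have hnil : (Word.equiv x).toList = [] := List.length_eq_zero_iff.mp (Nat.le_zero.mp hlen)
    have hw : Word.equiv x = Word.empty := Word.ext hnil
    have hx1 : x = 1 := by
      have := Word.equiv.symm_apply_apply x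
      rw [hw] at this
      rw [← this]; exact Word.prod_empty
    exact ⟨1, Classical.arbitrary ι, 1, by simp [hx1]⟩
  | succ n ih =>
    intro x hlen hx
    set w := Word.equiv x with hwdef
    have hprod : Word.prod w = x := Word.equiv.symm_apply_apply x
    by_cases h0 : w.toList = []
    · exact ⟨1, Classical.arbitrary ι, 1, by
        have hw : w = Word.empty := Word.ext h0
        have hx1 : x = 1 := by rw [← hprod, hw, Word.prod_empty]
        simp [hx1]⟩
    by_cases h1 : ∃ a, w.toList = [a]
    · obtain ⟨a, ha⟩ := h1
      refine ⟨1, a.1, a.2, ?_⟩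
      have : Word.prod w = CoprodI.of a.2 := by
        rw [Word.prod, ha]
        simp
      rw [← hprod, this]
      simp
    obtain ⟨a, r, hl, hr⟩ : ∃ a r, w.toList = a :: r ∧ r ≠ [] := by
      rcases hw' : w.toList with _ | ⟨a, r⟩
      · exact absurd hw' h0
      · rcases r with _ | ⟨y, t⟩
        · exact absurd ⟨a, hw'⟩ h1
        · exact ⟨a, y :: t, rfl, by simp⟩
    have hnil : w.toList ≠ [] := by rw [hl]; simp
    rcases hbdef : List.getLast w.toList hnil with ⟨j, bm⟩
    by_cases hij : a.1 = j
    case neg =>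
      -- cyclically reduced: infinite order, contradiction
      exfalso
      have hne : w ≠ Word.empty := fun h => hnil (by rw [h]; rfl)
      obtain ⟨i', j', w', hw'⟩ := NeWord.of_word w hne
      have htl : w'.toList = w.toList := congrArg Word.toList hw'
      have hh : (some ⟨i', w'.head⟩ : Option (Σ i, G i)) = some a := by
        rw [← w'.toList_head?, htl, hl]; rfl
      have hla : (some ⟨j', w'.last⟩ : Option (Σ i, G i)) = some ⟨j, bm⟩ := by
        rw [← w'.toList_getLast?, htl, ← hbdef]
        exact List.getLast?_eq_getLast hnil
      have hi' : i' = a.1 := congrArg Sigma.fst (Option.some.inj hh)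
      have hj' : j' = j := congrArg Sigma.fst (Option.some.inj hla)
      have hprod' : w'.prod = x := by
        rw [show w'.prod = Word.prod w'.toWord from rfl, hw', hprod]
      refine infinite_order_of_ne (i := i') (j := j') ?_ w' ?_
      · rw [hi', hj']; exact hij
      · rw [hprod']; exact hx
    case pos =>
      subst hij
      -- construct the tail word and init word
      have hchain : (a :: r).Chain' (fun l l' => l.1 ≠ l'.1) := hl ▸ w.chain_ne
      have hmemw : ∀ l ∈ a :: r, l ∈ w.toList := by rw [hl]; exact fun l h => h
      let wtail : Word G :=
        ⟨r.dropLast,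
         fun l hm => w.ne_one l (hmemw l (List.mem_cons_of_mem _ (r.dropLast_sublist.mem hm))),
         hchain.tail.prefix r.dropLast_prefix⟩
      let winit : Word G :=
        ⟨a :: r.dropLast,
         fun l hm => by
           rcases List.mem_cons.mp hm with h | h
           · exact w.ne_one l (hmemw l (h ▸ (List.mem_cons_self : a ∈ a :: r)))
           · exact w.ne_one l (hmemw l (List.mem_cons_of_mem _ (r.dropLast_sublist.mem h)))
         , by
           have : (a :: r).dropLast = a :: r.dropLast := List.dropLast_cons_of_ne_nil hr
           exact this ▸ hchain.prefix (a :: r).dropLast_prefix⟩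
      have h1' : Word.fstIdx wtail ≠ some a.1 := by
        rw [Word.fstIdx_ne_iff]
        have := (List.isChain_cons.mp winit.chain_ne).1
        exact this
      have h2' : a.2 ≠ 1 := w.ne_one a (hmemw a (List.mem_cons_self : a ∈ a :: r))
      have hwinit : winit = Word.cons a.2 wtail h1' h2' := by
        apply Word.ext
        show a :: r.dropLast = ⟨a.1, a.2⟩ :: r.dropLast
        rw [Sigma.eta]
      -- x = winit.prod * of bm
      have hsplit : w.toList = winit.toList ++ [⟨a.1, bm⟩] := by
        show w.toList = (a :: r.dropLast) ++ [⟨a.1, bm⟩]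
        rw [← List.dropLast_cons_of_ne_nil hr, ← hl, ← hbdef,
          List.dropLast_append_getLast hnil]
      have hx2 : x = winit.prod * CoprodI.of bm := by
        rw [← hprod, Word.prod, hsplit, List.map_append, List.prod_append]
        simp [Word.prod]
      set y := CoprodI.of bm * winit.prod with hydef
      have hconj : y = CoprodI.of bm * x * (CoprodI.of bm)⁻¹ := by
        rw [hydef, hx2]; group
      have hy : IsOfFinOrder y := by
        obtain ⟨k, hk, hpow⟩ := hx.exists_pow_eq_one
        refine isOfFinOrder_iff_pow_eq_one.mpr ⟨k, hk, ?_⟩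
        rw [hconj, conj_pow, hpow, mul_one, mul_inv_cancel]
      -- compute the word of y
      have heqy : Word.equiv y = Word.rcons ⟨bm * a.2, wtail, h1'⟩ := by
        have e1 : Word.equiv winit.prod = winit := Word.equiv.apply_symm_apply winit
        have e2 : Word.equiv y = CoprodI.of bm • winit := by
          show y • Word.empty = CoprodI.of bm • winit
          rw [hydef, mul_smul]
          congr 1
        rw [e2, hwinit, Word.cons_eq_smul, ← mul_smul, ← MonoidHom.map_mul,
          Word.of_smul_def, Word.equivPair_eq_of_fstIdx_ne h1']
        simp
      have hleny : (Word.equiv y).toList.length ≤ n := by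
        have hrlen : r.length ≤ n := by
          have := hlen
          rw [hl] at this
          simpa using this
        have hrpos : 0 < r.length := List.length_pos_iff.mpr hr
        rw [heqy, Word.rcons]
        split_ifs with h
        · show r.dropLast.length ≤ n
          rw [List.length_dropLast]; omega
        · show (⟨a.1, bm * a.2⟩ :: r.dropLast : List _).length ≤ n
          simp only [List.length_cons, List.length_dropLast]
          omega
      obtain ⟨c, i0, m0, hy2⟩ := ih y hleny hy
      refine ⟨(CoprodI.of bm)⁻¹ * c, i0, m0, ?_⟩
      have hxy : x = (CoprodI.of bm)⁻¹ * y * CoprodI.of bm := by rw [hconj]; group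
      rw [hxy, hy2]; group

end Classification

abbrev G2 := Multiplicative (ZMod 2)
abbrev G3 := Multiplicative (ZMod 3)

def Fb : Bool → Type := fun b => cond b G2 G3

instance : ∀ b, Group (Fb b) := fun b => by
  cases b
  · exact inferInstanceAs (Group G3)
  · exact inferInstanceAs (Group G2)

instance : ∀ b, DecidableEq (Fb b) := fun b => by
  cases b
  · exact inferInstanceAs (DecidableEq G3)
  · exact inferInstanceAs (DecidableEq G2)

def toCop : Coprod G2 G3 →* CoprodI Fb :=
  Coprod.lift (CoprodI.of (M := Fb) (i := true)) (CoprodI.of (M := Fb) (i := false))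

def fromCop : CoprodI Fb →* Coprod G2 G3 :=
  CoprodI.lift (fun b => Bool.rec Coprod.inr Coprod.inl b)

theorem fromCop_toCop (x : Coprod G2 G3) : fromCop (toCop x) = x := by
  have h : fromCop.comp toCop = MonoidHom.id _ := by
    apply Coprod.hom_ext <;> refine MonoidHom.ext fun x => ?_
    · show fromCop (toCop (Coprod.inl x)) = Coprod.inl x
      erw [toCop, Coprod.lift_apply_inl (CoprodI.of (M := Fb) (i := true)) (CoprodI.of (M := Fb) (i := false)) x]
      exact CoprodI.lift_of _ _
    · show fromCop (toCop (Coprod.inr x)) = Coprod.inr x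
      erw [toCop, Coprod.lift_apply_inr (CoprodI.of (M := Fb) (i := true)) (CoprodI.of (M := Fb) (i := false)) x]
      exact CoprodI.lift_of _ _
  exact DFunLike.congr_fun h x

-- concrete generators of A4
def pa : Perm (Fin 4) := Equiv.swap 0 1 * Equiv.swap 2 3
def pb : Perm (Fin 4) := Equiv.swap 0 2 * Equiv.swap 0 1

def A : alternatingGroup (Fin 4) :=
  ⟨pa, Equiv.Perm.mem_alternatingGroup.mpr (by decide)⟩
def B : alternatingGroup (Fin 4) :=
  ⟨pb, Equiv.Perm.mem_alternatingGroup.mpr (by decide)⟩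

def fA : G2 →* alternatingGroup (Fin 4) where
  toFun m := A ^ (Multiplicative.toAdd m).val
  map_one' := by decide
  map_mul' := by decide

def fB : G3 →* alternatingGroup (Fin 4) where
  toFun m := B ^ (Multiplicative.toAdd m).val
  map_one' := by decide
  map_mul' := by decide

theorem fA_inj : ∀ m : G2, fA m = 1 → m = 1 := by decide

theorem fB_inj : ∀ m : G3, fB m = 1 → m = 1 := by decide

theorem gen : ∀ y : alternatingGroup (Fin 4),
    ∃ m : Fin 3, ∃ n : Fin 2, ∃ k : Fin 3, y = B ^ (m : ℕ) * A ^ (n : ℕ) * B ^ (k : ℕ) := by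
  decide

def ga : G2 := Multiplicative.ofAdd (1 : ZMod 2)
def gb : G3 := Multiplicative.ofAdd (1 : ZMod 3)

theorem hga : fA ga = A := by decide
theorem hgb : fB gb = B := by decide

end Stmt13Aux

open Stmt13Aux in
theorem stmt_13 :
    ∃ φ : Coprod (Multiplicative (ZMod 2)) (Multiplicative (ZMod 3)) →*
        alternatingGroup (Fin 4),
      Function.Surjective φ ∧ Monoid.IsTorsionFree φ.ker := by
  refine ⟨Coprod.lift fA fB, ?_, ?_⟩
  · -- surjectivity
    intro y
    obtain ⟨m, n, k, hy⟩ := gen y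
    refine ⟨(Coprod.inr gb) ^ (m : ℕ) * (Coprod.inl ga) ^ (n : ℕ) * (Coprod.inr gb) ^ (k : ℕ), ?_⟩
    rw [map_mul, map_mul, map_pow, map_pow, map_pow,
      Coprod.lift_apply_inl, Coprod.lift_apply_inr, hga, hgb]
    exact hy.symm
  · -- torsion-free kernel
    intro g hg hfin
    apply hg
    obtain ⟨nn, hn, hpow⟩ := hfin.exists_pow_eq_one
    have hxpow : (g : Coprod G2 G3) ^ nn = 1 := by
      have := congrArg Subtype.val hpow
      push_cast at this
      exact_mod_cast this
    have hxfin : IsOfFinOrder (g : Coprod G2 G3) :=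
      isOfFinOrder_iff_pow_eq_one.mpr ⟨nn, hn, hxpow⟩
    have htfin : IsOfFinOrder (toCop (g : Coprod G2 G3)) := toCop.isOfFinOrder hxfin
    obtain ⟨c, i, m, hcm⟩ :=
      conj_of_isOfFinOrder (Monoid.CoprodI.Word.equiv (toCop (g : Coprod G2 G3))).toList.length
        (toCop (g : Coprod G2 G3)) le_rfl htfin
    have hx : (g : Coprod G2 G3)
        = fromCop c * fromCop (Monoid.CoprodI.of m) * (fromCop c)⁻¹ := by
      rw [← fromCop_toCop (g : Coprod G2 G3), hcm, map_mul, map_mul, map_inv]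
    have hker : Coprod.lift fA fB (g : Coprod G2 G3) = 1 := g.2
    have hm1 : Coprod.lift fA fB (fromCop (Monoid.CoprodI.of m)) = 1 := by
      rw [hx, map_mul, map_mul, map_inv] at hker
      have := congrArg
        (fun t => (Coprod.lift fA fB (fromCop c))⁻¹ * t * (Coprod.lift fA fB (fromCop c))) hker
      simpa [mul_assoc] using this
    have hm : Monoid.CoprodI.of m = (1 : Monoid.CoprodI Fb) := by
      cases i
      · -- false : G3
        have hfc : fromCop (Monoid.CoprodI.of m) = Coprod.inr m := Monoid.CoprodI.lift_of _ _
        rw [hfc] at hm1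
        have hm1' : fB m = 1 := hm1
        rw [fB_inj m hm1']; exact map_one _
      · -- true : G2
        have hfc : fromCop (Monoid.CoprodI.of m) = Coprod.inl m := Monoid.CoprodI.lift_of _ _
        rw [hfc] at hm1
        have hm1' : fA m = 1 := hm1
        rw [fA_inj m hm1']; exact map_one _
    have : (g : Coprod G2 G3) = 1 := by
      rw [← fromCop_toCop (g : Coprod G2 G3), hcm, hm]
      simp
    exact Subtype.ext this
end

section
/- Let m > 1 be an integer. Then there exists a surjective group homomorphism from the free product ℤ/2 ∗ D₂ onto the dihedral group D_{2m} of order 4m whose kernel is torsion-free. -/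
open Monoid

open CoprodI DihedralGroup

section General

variable {ι : Type*} {G : ι → Type*} [∀ i, Group (G i)]

theorem word_prod_injective [DecidableEq ι] [∀ i, DecidableEq (G i)] :
    Function.Injective (Word.prod : Word G → CoprodI G) :=
  fun _ _ h => (Word.equiv (M := G)).symm.injective h

theorem neword_pow_ne_one [DecidableEq ι] [∀ i, DecidableEq (G i)]
    {i j : ι} (w : NeWord G i j) (hij : j ≠ i) (n : ℕ) : w.prod ^ (n + 1) ≠ 1 := by
  have key : ∀ n : ℕ, ∃ w' : NeWord G i j, w'.prod = w.prod ^ (n + 1) := by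
    intro n
    induction n with
    | zero => exact ⟨w, by rw [pow_one]⟩
    | succ k ih =>
      obtain ⟨w', hw'⟩ := ih
      exact ⟨NeWord.append w hij w', by rw [NeWord.append_prod, hw', ← pow_succ']⟩
  obtain ⟨w', hw'⟩ := key n
  rw [← hw']
  intro h
  have h2 : w'.toWord.prod = Word.empty.prod := by
    rw [Word.prod_empty]; exact h
  exact w'.toList_ne_nil (by
    rw [show w'.toList = w'.toWord.toList from rfl, word_prod_injective h2]
    rfl)


theorem chain_snd_invariant {l : List (Σ k, G k)} {i : ι} {b b' : G i}
    (h : List.IsChain (fun p q : Σ k, G k => p.1 ≠ q.1) (l ++ [⟨i, b⟩])) :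
    List.IsChain (fun p q : Σ k, G k => p.1 ≠ q.1) (l ++ [⟨i, b'⟩]) := by
  have heq : (l ++ [(⟨i, b'⟩ : Σ k, G k)]).map Sigma.fst
      = (l ++ [(⟨i, b⟩ : Σ k, G k)]).map Sigma.fst := by simp
  rw [← List.isChain_map Sigma.fst] at h ⊢
  rwa [heq]

theorem key_induction [DecidableEq ι] [∀ i, DecidableEq (G i)] [Nonempty ι] :
    ∀ (n : ℕ) (w : Word G), w.toList.length ≤ n → IsOfFinOrder w.prod →
      ∃ (c : CoprodI G) (i : ι) (x : G i), w.prod = c * of x * c⁻¹ := by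
  intro n
  induction n with
  | zero =>
    intro w hw _
    rcases w with ⟨L, hne1, hchain⟩
    have : L = [] := List.length_eq_zero_iff.mp (Nat.le_zero.mp hw)
    subst this
    exact ⟨1, Classical.arbitrary ι, 1, by simp [Word.prod]⟩
  | succ n ih =>
    intro w hw hfin
    rcases w with ⟨L, hne1, hchain⟩
    rcases L with _ | ⟨⟨i, a⟩, tl⟩
    · exact ⟨1, Classical.arbitrary ι, 1, by simp [Word.prod]⟩
    by_cases htl' : tl = []
    · subst htl'
      exact ⟨1, i, a, by simp [Word.prod]⟩
    rcases hzz : tl.getLast htl' with ⟨j, b⟩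
    have hdecomp : tl = tl.dropLast ++ [⟨j, b⟩] := by
      conv_lhs => rw [← List.dropLast_append_getLast htl']
      rw [hzz]
    set mid := tl.dropLast with hmid
    have hL : (⟨i, a⟩ :: tl : List (Σ k, G k)) = ⟨i, a⟩ :: (mid ++ [⟨j, b⟩]) := by
      rw [← hdecomp]
    have hprod : Word.prod ⟨⟨i, a⟩ :: tl, hne1, hchain⟩ =
        of a * ((mid.map fun l => of l.snd).prod * of b) := by
      simp only [Word.prod, hL, List.map_cons, List.map_append, List.prod_cons,
        List.prod_append, List.map_nil, List.prod_nil, List.prod_singleton, mul_one, mul_assoc]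
    by_cases hij : i = j
    · subst hij
      set P : CoprodI G := (mid.map fun l => of l.snd).prod with hP
      have hchain' : List.IsChain (fun p q : Σ k, G k => p.1 ≠ q.1) (mid ++ [⟨i, b⟩]) := by
        have h2 := hchain.tail
        rwa [List.tail_cons, hdecomp] at h2
      have hmidne : ∀ l ∈ mid, Sigma.snd l ≠ 1 := by
        intro l hl
        exact hne1 l (by rw [hL]; exact List.mem_cons_of_mem _ (List.mem_append_left _ hl))
      have hlen : mid.length + 1 ≤ n := by
        have h3 : (⟨i, a⟩ :: tl : List (Σ k, G k)).length ≤ n + 1 := hw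
        rw [hL] at h3
        simp at h3
        omega
      have hconj : (of a)⁻¹ * Word.prod ⟨⟨i, a⟩ :: tl, hne1, hchain⟩ * of a
          = P * of (b * a) := by
        rw [hprod, map_mul]
        group
      have hback : Word.prod ⟨⟨i, a⟩ :: tl, hne1, hchain⟩
          = of a * (P * of (b * a)) * (of a)⁻¹ := by
        rw [← hconj]; group
      have hfin2 : IsOfFinOrder (P * of (b * a)) := by
        rw [← hconj]
        obtain ⟨k, hk, hpk⟩ := hfin.exists_pow_eq_one
        refine isOfFinOrder_iff_pow_eq_one.mpr ⟨k, hk, ?_⟩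
        rw [show (of a)⁻¹ * Word.prod ⟨⟨i, a⟩ :: tl, hne1, hchain⟩ * of a
          = (of a)⁻¹ * Word.prod ⟨⟨i, a⟩ :: tl, hne1, hchain⟩ * ((of a)⁻¹)⁻¹ by group,
          conj_pow, hpk, mul_one]
        group
      by_cases hba : b * a = 1
      · have hchainmid : List.IsChain (fun p q : Σ k, G k => p.1 ≠ q.1) mid :=
          hchain'.prefix (List.prefix_append _ _)
        have hPw : Word.prod ⟨mid, hmidne, hchainmid⟩ = P := by
          simp [Word.prod, hP]
        obtain ⟨c, i', x, hx⟩ := ih ⟨mid, hmidne, hchainmid⟩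
          (by show mid.length ≤ n; omega)
          (by rw [hPw]; rwa [hba, map_one, mul_one] at hfin2)
        rw [hPw] at hx
        refine ⟨of a * c, i', x, ?_⟩
        rw [hback, hba, map_one, mul_one, hx]
        group
      · have hchain2 : List.IsChain (fun p q : Σ k, G k => p.1 ≠ q.1)
            (mid ++ [⟨i, b * a⟩]) := chain_snd_invariant hchain'
        have hne2 : ∀ l ∈ mid ++ [(⟨i, b * a⟩ : Σ k, G k)], Sigma.snd l ≠ 1 := by
          intro l hl
          rcases List.mem_append.mp hl with h | h
          · exact hmidne l h
          · rcases List.mem_singleton.mp h with rfl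
            exact hba
        have hPw : Word.prod ⟨mid ++ [⟨i, b * a⟩], hne2, hchain2⟩ = P * of (b * a) := by
          simp [Word.prod, hP, List.map_append, List.prod_append]
        obtain ⟨c, i', x, hx⟩ := ih ⟨mid ++ [⟨i, b * a⟩], hne2, hchain2⟩
          (by show (mid ++ [(⟨i, b * a⟩ : Σ k, G k)]).length ≤ n; simp; omega)
          (by rw [hPw]; exact hfin2)
        rw [hPw] at hx
        refine ⟨of a * c, i', x, ?_⟩
        rw [hback, hx]
        group
    · exfalso
      obtain ⟨i', j', w', hw'⟩ := NeWord.of_word ⟨⟨i, a⟩ :: tl, hne1, hchain⟩ (by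
        intro h
        have h2 := congrArg Word.toList h
        simp [Word.empty] at h2)
      have htoList : w'.toList = ⟨i, a⟩ :: tl := congrArg Word.toList hw'
      have hhead := w'.toList_head?
      rw [htoList] at hhead
      simp only [List.head?_cons, Option.some.injEq] at hhead
      have hi' : i = i' := congrArg Sigma.fst hhead
      have hlast := w'.toList_getLast?
      rw [htoList, hdecomp, ← List.cons_append, List.getLast?_concat] at hlast
      have hj' : j = j' := congrArg Sigma.fst (Option.some_injective _ hlast)
      have hwprod : w'.prod = Word.prod ⟨⟨i, a⟩ :: tl, hne1, hchain⟩ := by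
        rw [show w'.prod = w'.toWord.prod from rfl, hw']
      obtain ⟨k, hk, hpk⟩ := hfin.exists_pow_eq_one
      rcases k with _ | k'
      · omega
      exact neword_pow_ne_one w' (by rw [← hi', ← hj']; exact fun h => hij h.symm) k'
        (by rw [hwprod]; exact hpk)

theorem coprodI_conj_of_isOfFinOrder [Nonempty ι] (g : CoprodI G) (hfin : IsOfFinOrder g) :
    ∃ (c : CoprodI G) (i : ι) (x : G i), g = c * of x * c⁻¹ := by
  classical
  have hprod : (Word.equiv (M := G) g).prod = g := Word.equiv.symm_apply_apply g
  obtain ⟨c, i, x, hx⟩ := key_induction (Word.equiv (M := G) g).toList.length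
    (Word.equiv (M := G) g) le_rfl (by rwa [hprod])
  exact ⟨c, i, x, by rwa [hprod] at hx⟩

end General

def Fac : Bool → Type
  | true => Multiplicative (ZMod 2)
  | false => DihedralGroup 2

instance facGroup : ∀ b, Group (Fac b)
  | true => inferInstanceAs (Group (Multiplicative (ZMod 2)))
  | false => inferInstanceAs (Group (DihedralGroup 2))

def f1 (m : ℕ) : Multiplicative (ZMod 2) →* DihedralGroup (2 * m) where
  toFun x := sr 1 ^ (Multiplicative.toAdd x).val
  map_one' := by simp
  map_mul' x y := by
    simp only [toAdd_mul]
    rw [ZMod.val_add]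
    have h2 : ((Multiplicative.toAdd x).val + (Multiplicative.toAdd y).val) % 2
        = ((Multiplicative.toAdd x).val + (Multiplicative.toAdd y).val)
          % orderOf (sr (1 : ZMod (2 * m))) := by
      rw [DihedralGroup.orderOf_sr]
    rw [h2, pow_mod_orderOf, pow_add]

theorem f1_one_iff (m : ℕ) (x : Multiplicative (ZMod 2)) (h : f1 m x = 1) : x = 1 := by
  have hx : ∀ z : Multiplicative (ZMod 2), z = 1 ∨ z = Multiplicative.ofAdd 1 := by decide
  rcases hx x with rfl | rfl
  · rfl
  · exfalso
    have hv : ((Multiplicative.toAdd (Multiplicative.ofAdd (1 : ZMod 2))).val) = 1 := rfl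
    have : f1 m (Multiplicative.ofAdd 1) = sr 1 := by
      simp only [f1, MonoidHom.coe_mk, OneHom.coe_mk, hv, pow_one]
    rw [this, DihedralGroup.one_def] at h
    exact (by cases h)

def cmap (m : ℕ) : ZMod 2 →+ ZMod (2 * m) :=
  ZMod.lift 2 ⟨zmultiplesHom (ZMod (2 * m)) ((m : ℕ) : ZMod (2 * m)), by
    show ((2 : ℕ) : ℤ) • ((m : ℕ) : ZMod (2 * m)) = 0
    rw [zsmul_eq_mul]
    push_cast
    rw [show (2 : ZMod (2 * m)) * (m : ℕ) = ((2 * m : ℕ) : ZMod (2 * m)) by push_cast; ring,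
      ZMod.natCast_self]⟩

theorem cmap_one (m : ℕ) : cmap m 1 = ((m : ℕ) : ZMod (2 * m)) := by
  have : ((1 : ℤ) : ZMod 2) = 1 := by norm_num
  rw [← this, cmap, ZMod.lift_coe]
  exact one_zsmul _

theorem cmap_injective (m : ℕ) (hm : 1 < m) : Function.Injective (cmap m) := by
  have hne : ((m : ℕ) : ZMod (2 * m)) ≠ 0 := by
    rw [Ne, ZMod.natCast_eq_zero_iff]
    intro h
    have := Nat.le_of_dvd (by omega) h
    omega
  intro x y h
  have hx : ∀ z : ZMod 2, z = 0 ∨ z = 1 := by decide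
  rcases hx x with rfl | rfl <;> rcases hx y with rfl | rfl <;>
    simp only [map_zero, cmap_one] at h ⊢ <;> first | rfl | exact absurd h.symm hne | exact absurd h hne

def f2 (m : ℕ) : DihedralGroup 2 →* DihedralGroup (2 * m) where
  toFun x := match x with
    | DihedralGroup.r i => DihedralGroup.r (cmap m i)
    | DihedralGroup.sr i => DihedralGroup.sr (cmap m i)
  map_one' := by
    show DihedralGroup.r (cmap m 0) = 1
    rw [map_zero, ← DihedralGroup.one_def]
  map_mul' x y := by
    rcases x with i | i <;> rcases y with j | j <;>
      simp only [DihedralGroup.r_mul_r, DihedralGroup.r_mul_sr, DihedralGroup.sr_mul_r,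
        DihedralGroup.sr_mul_sr, map_add, map_sub]

theorem f2_one_iff (m : ℕ) (hm : 1 < m) (x : DihedralGroup 2) (h : f2 m x = 1) : x = 1 := by
  rcases x with i | i
  · have : DihedralGroup.r (cmap m i) = DihedralGroup.r 0 := by
      rwa [← DihedralGroup.one_def]
    have hi : cmap m i = 0 := by injection this
    have : i = 0 := cmap_injective m hm (by rwa [map_zero])
    rw [this, DihedralGroup.one_def]
  · exfalso
    rw [DihedralGroup.one_def] at h
    have h2 : DihedralGroup.sr (cmap m i) = DihedralGroup.r 0 := h
    exact (by cases h2)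

def F (m : ℕ) : ∀ b, Fac b →* DihedralGroup (2 * m)
  | true => f1 m
  | false => f2 m

def eHom : Coprod (Multiplicative (ZMod 2)) (DihedralGroup 2) →* CoprodI Fac :=
  Coprod.lift ((CoprodI.of (i := true) : Fac true →* CoprodI Fac))
    ((CoprodI.of (i := false) : Fac false →* CoprodI Fac))

def piHom : CoprodI Fac →* Coprod (Multiplicative (ZMod 2)) (DihedralGroup 2) :=
  CoprodI.lift fun b => match b with
    | true => Coprod.inl
    | false => Coprod.inr

theorem pi_e : ∀ x, piHom (eHom x) = x := by
  have h : piHom.comp eHom = MonoidHom.id _ := by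
    apply Coprod.hom_ext
    · refine MonoidHom.ext fun z => ?_
      show piHom (eHom (Coprod.inl z)) = Coprod.inl z
      show piHom (CoprodI.of (i := true) z) = Coprod.inl z
      exact CoprodI.lift_of _ _
    · refine MonoidHom.ext fun z => ?_
      show piHom (eHom (Coprod.inr z)) = Coprod.inr z
      show piHom (CoprodI.of (i := false) z) = Coprod.inr z
      exact CoprodI.lift_of _ _
  exact fun x => DFunLike.congr_fun h x

theorem e_injective : Function.Injective eHom :=
  Function.LeftInverse.injective pi_e

theorem f1_ofAdd_one (m : ℕ) : f1 m (Multiplicative.ofAdd 1) = sr 1 := by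
  have hv : ((Multiplicative.toAdd (Multiplicative.ofAdd (1 : ZMod 2))).val) = 1 := rfl
  simp only [f1, MonoidHom.coe_mk, OneHom.coe_mk, hv, pow_one]

theorem stmt_14 (m : ℕ) (hm : 1 < m) :
    ∃ φ : Coprod (Multiplicative (ZMod 2)) (DihedralGroup 2) →* DihedralGroup (2 * m),
      Function.Surjective φ ∧ Monoid.IsTorsionFree φ.ker := by
  haveI : NeZero (2 * m) := ⟨by omega⟩
  refine ⟨(CoprodI.lift (F m)).comp eHom, ?_, ?_⟩
  · -- surjectivity
    have hsr1 : sr (1 : ZMod (2 * m)) ∈ ((CoprodI.lift (F m)).comp eHom).range := by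
      refine ⟨Coprod.inl (Multiplicative.ofAdd (1 : ZMod 2)), ?_⟩
      show (CoprodI.lift (F m)) (CoprodI.of (i := true) (M := Fac) (Multiplicative.ofAdd (1 : ZMod 2))) = sr 1
      exact (CoprodI.lift_of (F m) (i := true) (Multiplicative.ofAdd (1 : ZMod 2) : Fac true)).trans (f1_ofAdd_one m)
    have hsr0 : sr (0 : ZMod (2 * m)) ∈ ((CoprodI.lift (F m)).comp eHom).range := by
      refine ⟨Coprod.inr (DihedralGroup.sr 0), ?_⟩
      show (CoprodI.lift (F m)) (CoprodI.of (i := false) (DihedralGroup.sr 0)) = sr 0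
      exact (CoprodI.lift_of (F m) (i := false) (DihedralGroup.sr 0 : Fac false)).trans (by
        show DihedralGroup.sr (cmap m 0) = sr 0
        rw [map_zero])
    have hr1 : DihedralGroup.r (1 : ZMod (2 * m)) ∈ ((CoprodI.lift (F m)).comp eHom).range := by
      have h := mul_mem hsr0 hsr1
      rwa [DihedralGroup.sr_mul_sr, sub_zero] at h
    have hrk : ∀ k : ZMod (2 * m),
        DihedralGroup.r k ∈ ((CoprodI.lift (F m)).comp eHom).range := by
      intro k
      have hp := pow_mem hr1 k.val
      rwa [DihedralGroup.r_one_pow, ZMod.natCast_rightInverse k] at hp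
    intro d
    rcases d with k | k
    · exact hrk k
    · have h := mul_mem hsr0 (hrk k)
      rwa [DihedralGroup.sr_mul_r, zero_add] at h
  · -- torsion-free kernel
    intro g hg hfin
    have hgv : (g : Coprod (Multiplicative (ZMod 2)) (DihedralGroup 2)) ≠ 1 :=
      fun h => hg (Subtype.ext h)
    have hfe : IsOfFinOrder (eHom (g : Coprod (Multiplicative (ZMod 2)) (DihedralGroup 2))) :=
      (eHom.comp ((CoprodI.lift (F m)).comp eHom).ker.subtype).isOfFinOrder hfin
    obtain ⟨c, i, x, hx⟩ := coprodI_conj_of_isOfFinOrder (eHom (g : _)) hfe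
    have h1 : (CoprodI.lift (F m)) (eHom (g : _)) = 1 := MonoidHom.mem_ker.mp g.2
    rw [hx, map_mul, map_mul, map_inv] at h1
    have h2 : (CoprodI.lift (F m)) (CoprodI.of x) = 1 := by
      calc (CoprodI.lift (F m)) (CoprodI.of x)
          = ((CoprodI.lift (F m)) c)⁻¹
            * ((CoprodI.lift (F m)) c * (CoprodI.lift (F m)) (CoprodI.of x)
              * ((CoprodI.lift (F m)) c)⁻¹) * (CoprodI.lift (F m)) c := by group
        _ = 1 := by rw [h1]; group
    have hx1 : x = 1 := by
      rw [CoprodI.lift_of] at h2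
      cases i
      · exact f2_one_iff m hm x h2
      · exact f1_one_iff m x h2
    rw [hx1, map_one, mul_one, mul_inv_cancel] at hx
    exact hgv (e_injective (hx.trans (map_one eHom).symm))
end
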